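/- arXiv:1701.01157 — 6 statements merged into one kernel-verified Lean document; each statement's English description precedes it below -/
import Mathlib

section
/- A nonzero integer n is congruent to a sum of two squares modulo 2^α for every α ≥ 1 if and only if n = 2^β · m for some β ≥ 0 and some integer m ≡ 1 (mod 4). -/
private lemma pow2_mul_sum_sq (β : ℕ) (a b : ℤ) :
    ∃ c d : ℤ, 2 ^ β * (a ^ 2 + b ^ 2) = c ^ 2 + d ^ 2 := by
  induction β with
  | zero => exact ⟨a, b, by ring⟩
  | succ k ih =>
    obtain ⟨c, d, h⟩ := ih
    refine ⟨c + d, c - d, ?_⟩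
    rw [pow_succ, mul_comm ((2:ℤ)^k) 2, mul_assoc, h]; ring

private lemma sqrt_mod (m : ℤ) (hm : m % 8 = 1) :
    ∀ α : ℕ, ∃ a : ℤ, a % 2 = 1 ∧ (2:ℤ) ^ α ∣ a ^ 2 - m := by
  intro α
  induction α with
  | zero => exact ⟨1, rfl, one_dvd _⟩
  | succ k ih =>
    rcases le_or_gt (k+1) 3 with hk | hk
    · refine ⟨1, rfl, dvd_trans (a := (2:ℤ)^(k+1)) (b := (2:ℤ)^3) (pow_dvd_pow 2 hk) ?_⟩
      have : (1:ℤ) ^ 2 - m = 1 - m := by ring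
      rw [this]
      norm_num
      omega
    · obtain ⟨a, ha2, t, ht⟩ := ih
      obtain ⟨j, rfl⟩ : ∃ j, k = j + 3 := ⟨k - 3, by omega⟩
      obtain ⟨c, rfl⟩ : ∃ c, a = 2 * c + 1 := ⟨a / 2, by omega⟩
      refine ⟨2 * c + 1 + 2 ^ (j + 2) * t, ?_, t * (c + 1) + 2 ^ j * t ^ 2, ?_⟩
      · have h2 : (2:ℤ) ∣ 2 ^ (j + 2) * t :=
          dvd_mul_of_dvd_left (dvd_pow_self 2 (by omega)) t
        omega
      · have hm' : m = (2 * c + 1) ^ 2 - 2 ^ (j + 3) * t := by linarith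
        rw [hm']
        have e1 : (2:ℤ) ^ (j + 2) = 2 ^ j * 4 := by rw [pow_add]; norm_num
        have e2 : (2:ℤ) ^ (j + 3) = 2 ^ j * 8 := by rw [pow_add]; norm_num
        have e3 : (2:ℤ) ^ (j + 4) = 2 ^ j * 16 := by rw [pow_add]; norm_num
        rw [e1, e2, e3]
        ring

private lemma sum_sq_odd_part : ∀ N : ℕ, ∀ a b : ℤ, (a ^ 2 + b ^ 2).natAbs ≤ N →
    a ^ 2 + b ^ 2 ≠ 0 → ∃ (γ : ℕ) (m : ℤ), m % 4 = 1 ∧ a ^ 2 + b ^ 2 = 2 ^ γ * m := by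
  intro N
  induction N with
  | zero =>
    intro a b hle hne
    exact absurd (Int.natAbs_eq_zero.mp (Nat.le_zero.mp hle)) hne
  | succ N ih =>
    intro a b hle hne
    rcases Int.even_or_odd a with ⟨a', rfl⟩ | ⟨a', rfl⟩ <;>
      rcases Int.even_or_odd b with ⟨b', rfl⟩ | ⟨b', rfl⟩
    · -- both even
      have h4 : (a' + a') ^ 2 + (b' + b') ^ 2 = 4 * (a' ^ 2 + b' ^ 2) := by ring
      have hne' : a' ^ 2 + b' ^ 2 ≠ 0 := by
        intro h0; apply hne; rw [h4, h0, mul_zero]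
      have habs : ((a' + a') ^ 2 + (b' + b') ^ 2).natAbs = 4 * (a' ^ 2 + b' ^ 2).natAbs := by
        rw [h4, Int.natAbs_mul]; rfl
      have h1 : 1 ≤ (a' ^ 2 + b' ^ 2).natAbs := Nat.one_le_iff_ne_zero.mpr
        (fun h => hne' (Int.natAbs_eq_zero.mp h))
      obtain ⟨γ, m, hm, heq⟩ := ih a' b' (by omega) hne'
      exact ⟨γ + 2, m, hm, by rw [h4, heq]; ring⟩
    · -- a even, b odd
      refine ⟨0, (a' + a') ^ 2 + (2 * b' + 1) ^ 2, ?_, by ring⟩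
      have : (a' + a') ^ 2 + (2 * b' + 1) ^ 2 = 4 * (a' ^ 2 + b' ^ 2 + b') + 1 := by ring
      omega
    · -- a odd, b even
      refine ⟨0, (2 * a' + 1) ^ 2 + (b' + b') ^ 2, ?_, by ring⟩
      have : (2 * a' + 1) ^ 2 + (b' + b') ^ 2 = 4 * (a' ^ 2 + a' + b' ^ 2) + 1 := by ring
      omega
    · -- both odd
      obtain ⟨u, hu⟩ := Int.even_mul_succ_self a'
      obtain ⟨v, hv⟩ := Int.even_mul_succ_self b'
      refine ⟨1, 4 * (u + v) + 1, by omega, ?_⟩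
      have : (2:ℤ) ^ 1 = 2 := by norm_num
      rw [this]
      linear_combination 4 * hu + 4 * hv

/-- A nonzero integer `n` is congruent to a sum of two squares modulo `2^α` for
every `α ≥ 1` if and only if `n = 2^β * m` for some `β ≥ 0` and `m ≡ 1 (mod 4)`. -/
theorem mem_S_two_iff (n : ℤ) (hn : n ≠ 0) :
    (∀ α : ℕ, 1 ≤ α → ∃ a b : ℤ, 0 ≤ a ∧ 0 ≤ b ∧ n ≡ a ^ 2 + b ^ 2 [ZMOD (2 : ℤ) ^ α]) ↔
      ∃ (β : ℕ) (m : ℤ), m % 4 = 1 ∧ n = 2 ^ β * m := by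
  constructor
  · intro h
    -- extract the 2-adic valuation of n
    obtain ⟨β, m₀, hm₀, habs⟩ := Nat.exists_eq_pow_mul_and_not_dvd
      (Int.natAbs_ne_zero.mpr hn) 2 (by norm_num)
    have hm₀2 : m₀ % 2 = 1 := by omega
    obtain ⟨m, hn', hmodd⟩ : ∃ m : ℤ, n = 2 ^ β * m ∧ m % 2 = 1 := by
      rcases Int.natAbs_eq n with he | he
      · exact ⟨(m₀ : ℤ), by rw [he, habs]; push_cast; ring, by omega⟩
      · exact ⟨-(m₀ : ℤ), by rw [he, habs]; push_cast; ring, by omega⟩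
    obtain ⟨a, b, -, -, hab⟩ := h (β + 2) (by omega)
    have hd : (2:ℤ) ^ (β + 2) ∣ (a ^ 2 + b ^ 2) - n := Int.ModEq.dvd hab
    have hsne : a ^ 2 + b ^ 2 ≠ 0 := by
      intro h0
      rw [h0, zero_sub, dvd_neg, hn'] at hd
      obtain ⟨t, htt⟩ := hd
      have h4 : (2:ℤ) ^ (β + 2) = 2 ^ β * 4 := by rw [pow_add]; norm_num
      rw [h4, mul_assoc] at htt
      have := mul_left_cancel₀ (pow_ne_zero β (two_ne_zero (α := ℤ))) htt
      omega
    obtain ⟨γ, m', hm'4, heq⟩ := sum_sq_odd_part (a ^ 2 + b ^ 2).natAbs a b le_rfl hsne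
    rw [heq, hn'] at hd
    rcases lt_trichotomy γ β with hlt | hEq | hgt
    · exfalso
      have h1 : (2:ℤ) ^ (γ + 1) ∣ 2 ^ γ * m' - 2 ^ β * m :=
        dvd_trans (pow_dvd_pow 2 (by omega)) hd
      have h2 : (2:ℤ) ^ (γ + 1) ∣ 2 ^ β * m :=
        dvd_mul_of_dvd_left (pow_dvd_pow 2 (by omega)) m
      have h3 : (2:ℤ) ^ (γ + 1) ∣ 2 ^ γ * m' := by
        have := dvd_add h1 h2
        rwa [sub_add_cancel] at this
      rw [pow_succ] at h3
      rw [mul_dvd_mul_iff_left (pow_ne_zero γ (two_ne_zero (α := ℤ)))] at h3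
      obtain ⟨k, hk⟩ := h3
      omega
    · subst hEq
      have h4 : (2:ℤ) ^ (γ + 2) = 2 ^ γ * 4 := by rw [pow_add]; norm_num
      have hsub : (2:ℤ) ^ γ * m' - 2 ^ γ * m = 2 ^ γ * (m' - m) := by ring
      rw [h4, hsub, mul_dvd_mul_iff_left (pow_ne_zero γ (two_ne_zero (α := ℤ)))] at hd
      obtain ⟨k, hk⟩ := hd
      exact ⟨γ, m, by omega, hn'⟩
    · exfalso
      have h1 : (2:ℤ) ^ (β + 1) ∣ 2 ^ γ * m' - 2 ^ β * m :=
        dvd_trans (pow_dvd_pow 2 (by omega)) hd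
      have h2 : (2:ℤ) ^ (β + 1) ∣ 2 ^ γ * m' :=
        dvd_mul_of_dvd_left (pow_dvd_pow 2 (by omega)) m'
      have h3 : (2:ℤ) ^ (β + 1) ∣ 2 ^ β * m := by
        have := dvd_sub h2 h1
        rwa [sub_sub_cancel] at this
      rw [pow_succ] at h3
      rw [mul_dvd_mul_iff_left (pow_ne_zero β (two_ne_zero (α := ℤ)))] at h3
      obtain ⟨k, hk⟩ := h3
      omega
  · rintro ⟨β, m, hm4, rfl⟩ α hα
    have h8 : m % 8 = 1 ∨ m % 8 = 5 := by omega
    obtain ⟨a, b, hd'⟩ : ∃ a b : ℤ, (2:ℤ) ^ α ∣ (a ^ 2 + b ^ 2) - m := by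
      rcases h8 with h8 | h8
      · obtain ⟨a, -, hd⟩ := sqrt_mod m h8 α
        exact ⟨a, 0, by have : a ^ 2 + 0 ^ 2 - m = a ^ 2 - m := by ring
                        rw [this]; exact hd⟩
      · obtain ⟨a, -, hd⟩ := sqrt_mod (m - 4) (by omega) α
        exact ⟨a, 2, by have : a ^ 2 + 2 ^ 2 - m = a ^ 2 - (m - 4) := by ring
                        rw [this]; exact hd⟩
    obtain ⟨c, d, hcd⟩ := pow2_mul_sum_sq β a b
    refine ⟨|c|, |d|, abs_nonneg c, abs_nonneg d, ?_⟩
    rw [sq_abs, sq_abs, Int.modEq_iff_dvd, ← hcd]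
    have : (2:ℤ) ^ β * (a ^ 2 + b ^ 2) - 2 ^ β * m = 2 ^ β * ((a ^ 2 + b ^ 2) - m) := by ring
    rw [this]
    exact hd'.mul_left _
end

section
/- Let p be a prime with p ≡ 3 (mod 4). A nonzero integer n is congruent to a sum of two squares modulo p^α for every α ≥ 1 if and only if n = p^{2β} · m for some β ≥ 0 and some integer m not divisible by p. -/
/-- If `p ≡ 3 [MOD 4]` divides `a² + b²`, it divides both `a` and `b`. -/
lemma aux_dvd_of_dvd_sq_add_sq (p : ℕ) (hp : p.Prime) (hp3 : p % 4 = 3) (a b : ℤ)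
    (h : (p : ℤ) ∣ a ^ 2 + b ^ 2) : (p : ℤ) ∣ a ∧ (p : ℤ) ∣ b := by
  haveI : Fact p.Prime := ⟨hp⟩
  have h0 : ((a : ZMod p)) ^ 2 + ((b : ZMod p)) ^ 2 = 0 := by
    have := (ZMod.intCast_zmod_eq_zero_iff_dvd (a ^ 2 + b ^ 2) p).mpr h
    push_cast at this
    exact this
  have hA : (a : ZMod p) = 0 := by
    by_contra hA
    have hsq : IsSquare (-1 : ZMod p) := by
      refine ⟨(b : ZMod p) * ((a : ZMod p))⁻¹, ?_⟩
      have hinv : (a : ZMod p) * ((a : ZMod p))⁻¹ = 1 := ZMod.mul_inv_of_unit _ (by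
        exact Ne.isUnit hA)
      have hb2 : ((b : ZMod p)) ^ 2 = -((a : ZMod p)) ^ 2 := by linear_combination h0
      field_simp
      linear_combination -hb2
    exact (ZMod.exists_sq_eq_neg_one_iff.mp hsq) hp3
  have hB : (b : ZMod p) = 0 := by
    have : ((b : ZMod p)) ^ 2 = 0 := by rw [hA] at h0; simpa using h0
    exact pow_eq_zero_iff (n := 2) (by norm_num) |>.mp this
  exact ⟨(ZMod.intCast_zmod_eq_zero_iff_dvd a p).mp hA,
    (ZMod.intCast_zmod_eq_zero_iff_dvd b p).mp hB⟩

/-- Every `c` not divisible by `p` is a sum of two squares mod `p^α` (Hensel lifting). -/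
lemma aux_rep (p : ℕ) (hp : p.Prime) (hp3 : p % 4 = 3) :
    ∀ α : ℕ, 1 ≤ α → ∀ c : ℤ, ¬ (p : ℤ) ∣ c →
      ∃ a b : ℤ, (p : ℤ) ^ α ∣ a ^ 2 + b ^ 2 - c := by
  haveI : Fact p.Prime := ⟨hp⟩
  have hodd : ¬ (p : ℤ) ∣ 2 := by
    intro h
    have h2 : p ∣ 2 := by exact_mod_cast h
    have := Nat.le_of_dvd (by norm_num) h2
    omega
  have hprime : Prime (p : ℤ) := Nat.prime_iff_prime_int.mp hp
  intro α
  induction α with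
  | zero => omega
  | succ γ ih =>
    intro _ c hc
    rcases Nat.eq_zero_or_pos γ with hγ | hγ
    · -- base case: α = 1
      subst hγ
      obtain ⟨A, B, hAB⟩ := ZMod.sq_add_sq p (c : ZMod p)
      refine ⟨(A.val : ℤ), (B.val : ℤ), ?_⟩
      rw [pow_one, ← ZMod.intCast_zmod_eq_zero_iff_dvd]
      push_cast
      simp only [ZMod.natCast_val, ZMod.intCast_cast, ZMod.cast_id]
      rw [hAB]; ring
    · -- inductive step
      obtain ⟨a, b, hab⟩ := ih hγ c hc
      have key : ∀ a b : ℤ, ¬ (p : ℤ) ∣ a → (p : ℤ) ^ γ ∣ a ^ 2 + b ^ 2 - c →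
          ∃ a' b' : ℤ, (p : ℤ) ^ (γ + 1) ∣ a' ^ 2 + b' ^ 2 - c := by
        intro a b ha hab
        obtain ⟨d, hd⟩ := hab
        have hco : IsCoprime (p : ℤ) (2 * a) := by
          rw [hprime.coprime_iff_not_dvd]
          intro h
          rcases hprime.dvd_mul.mp h with h2 | h2
          · exact hodd h2
          · exact ha h2
        obtain ⟨v, u, huv⟩ := hco  -- v * p + u * (2 * a) = 1
        obtain ⟨γ', rfl⟩ : ∃ γ', γ = γ' + 1 := ⟨γ - 1, by omega⟩
        refine ⟨a + (-(u * d)) * (p : ℤ) ^ (γ' + 1), b,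
          v * d + (-(u * d)) ^ 2 * (p : ℤ) ^ γ', ?_⟩
        linear_combination hd - (p : ℤ) ^ (γ' + 1) * d * huv
      have hpa_or : ¬ (p : ℤ) ∣ a ∨ ¬ (p : ℤ) ∣ b := by
        by_contra h
        push_neg at h
        obtain ⟨⟨a', rfl⟩, ⟨b', rfl⟩⟩ := h
        have h1 : (p : ℤ) ∣ a' ^ 2 * (p:ℤ)^2 + b' ^ 2 * (p:ℤ)^2 - c := by
          calc (p : ℤ) ∣ (p : ℤ) ^ γ := dvd_pow_self _ (by omega)
          _ ∣ _ := by convert hab using 1; ring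
        have : (p : ℤ) ∣ c := by
          have h2 : (p : ℤ) ∣ a' ^ 2 * (p:ℤ)^2 + b' ^ 2 * (p:ℤ)^2 :=
            ⟨a' ^ 2 * p + b' ^ 2 * p, by ring⟩
          have := dvd_sub h2 h1
          simpa using this
        exact hc this
      rcases hpa_or with h | h
      · exact key a b h hab
      · exact key b a h (by convert hab using 1; ring)

/-- `p^(2j+1) * m` with `p ∤ m` is not a sum of two squares mod `p^(2j+2)`. -/
lemma aux_no_odd (p : ℕ) (hp : p.Prime) (hp3 : p % 4 = 3) :
    ∀ j : ℕ, ∀ a b m : ℤ, ¬ (p : ℤ) ∣ m →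
      ¬ (p : ℤ) ^ (2 * j + 2) ∣ a ^ 2 + b ^ 2 - (p : ℤ) ^ (2 * j + 1) * m := by
  have hp0 : (p : ℤ) ≠ 0 := by exact_mod_cast hp.ne_zero
  intro j
  induction j with
  | zero =>
    intro a b m hm h
    simp only [Nat.mul_zero, Nat.zero_add, pow_one] at h
    have hdvd : (p : ℤ) ∣ a ^ 2 + b ^ 2 := by
      have h1 : (p : ℤ) ∣ a ^ 2 + b ^ 2 - (p : ℤ) * m :=
        dvd_trans (dvd_pow_self _ (by norm_num)) h
      have := dvd_add h1 ⟨m, rfl⟩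
      simpa using this
    obtain ⟨⟨a', rfl⟩, ⟨b', rfl⟩⟩ := aux_dvd_of_dvd_sq_add_sq p hp hp3 _ _ hdvd
    have h2 : (p : ℤ) ^ 2 ∣ (p : ℤ) * m := by
      have h3 : (p : ℤ) ^ 2 ∣ ((p:ℤ)*a') ^ 2 + ((p:ℤ)*b') ^ 2 := ⟨a'^2 + b'^2, by ring⟩
      have := dvd_sub h3 h
      simpa using this
    have : (p : ℤ) ∣ m := by
      rw [pow_two] at h2
      exact (mul_dvd_mul_iff_left hp0).mp h2
    exact hm this
  | succ j ih =>
    intro a b m hm h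
    have hdvd : (p : ℤ) ∣ a ^ 2 + b ^ 2 := by
      have h1 : (p : ℤ) ∣ a ^ 2 + b ^ 2 - (p : ℤ) ^ (2 * (j+1) + 1) * m :=
        dvd_trans (dvd_pow_self _ (by omega)) h
      have h2 : (p : ℤ) ∣ (p : ℤ) ^ (2 * (j+1) + 1) * m :=
        dvd_mul_of_dvd_left (dvd_pow_self _ (by omega)) m
      have := dvd_add h1 h2
      simpa using this
    obtain ⟨⟨a', rfl⟩, ⟨b', rfl⟩⟩ := aux_dvd_of_dvd_sq_add_sq p hp hp3 _ _ hdvd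
    apply ih a' b' m hm
    have heq : ((p:ℤ)*a') ^ 2 + ((p:ℤ)*b') ^ 2 - (p : ℤ) ^ (2 * (j+1) + 1) * m
        = (p : ℤ) ^ 2 * (a' ^ 2 + b' ^ 2 - (p : ℤ) ^ (2 * j + 1) * m) := by ring
    rw [heq, show 2 * (j+1) + 2 = 2 + (2 * j + 2) by ring, pow_add] at h
    exact (mul_dvd_mul_iff_left (pow_ne_zero 2 hp0)).mp h

/-- For a prime `p ≡ 3 (mod 4)`, a nonzero integer `n` is congruent to a sum of two
squares modulo `p^α` for every `α ≥ 1` iff `n = p^(2β) * m` with `p ∤ m`. -/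
theorem mem_S_p_iff (p : ℕ) (hp : p.Prime) (hp3 : p % 4 = 3) (n : ℤ) (hn : n ≠ 0) :
    (∀ α : ℕ, 1 ≤ α → ∃ a b : ℤ, n ≡ a ^ 2 + b ^ 2 [ZMOD (p : ℤ) ^ α]) ↔
      ∃ (β : ℕ) (m : ℤ), ¬ (p : ℤ) ∣ m ∧ n = (p : ℤ) ^ (2 * β) * m := by
  constructor
  · intro h
    have hfin : FiniteMultiplicity (p : ℤ) n :=
      Int.finiteMultiplicity_iff.mpr ⟨by simpa using hp.ne_one, hn⟩
    obtain ⟨m, hnm, hm⟩ := hfin.exists_eq_pow_mul_and_not_dvd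
    have hkeven : multiplicity (p : ℤ) n % 2 = 0 := by
      by_contra hodd
      obtain ⟨j, hj⟩ : ∃ j, multiplicity (p : ℤ) n = 2 * j + 1 :=
        ⟨multiplicity (p : ℤ) n / 2, by omega⟩
      rw [hj] at hnm
      obtain ⟨a, b, hab⟩ := h (2 * j + 2) (by omega)
      have hdvd : (p : ℤ) ^ (2 * j + 2) ∣ a ^ 2 + b ^ 2 - (p : ℤ) ^ (2 * j + 1) * m := by
        rw [← hnm]
        exact Int.ModEq.dvd hab
      exact aux_no_odd p hp hp3 j a b m hm hdvd
    refine ⟨multiplicity (p : ℤ) n / 2, m, hm, ?_⟩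
    have h2 : 2 * (multiplicity (p : ℤ) n / 2) = multiplicity (p : ℤ) n := by omega
    rw [h2]
    exact hnm
  · rintro ⟨β, m, hm, rfl⟩ α hα
    obtain ⟨a, b, hab⟩ := aux_rep p hp hp3 α hα m hm
    refine ⟨(p : ℤ) ^ β * a, (p : ℤ) ^ β * b, ?_⟩
    rw [Int.modEq_iff_dvd]
    have heq : ((p:ℤ)^β * a) ^ 2 + ((p:ℤ)^β * b) ^ 2 - (p : ℤ) ^ (2 * β) * m
        = (p : ℤ) ^ (2 * β) * (a ^ 2 + b ^ 2 - m) := by ring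
    rw [heq]
    exact dvd_mul_of_dvd_right hab _
end

section
/- Fix A ≥ 1. For all real x ≥ 1, the sum over squarefree integers n > x of A^{ω(n)}/n² is O_A((log 3x)^{A−1}/x), where ω(n) is the number of distinct prime factors of n. -/
open Real Finset

namespace SqfTail

/-- Telescoping sum over `Ico`. -/
lemma tele (f : ℕ → ℝ) {m n : ℕ} (h : m ≤ n) :
    ∑ i ∈ Ico m n, (f (i + 1) - f i) = f n - f m := by
  induction n, h using Nat.le_induction with
  | base => simp
  | succ n hn ih => rw [Finset.sum_Ico_succ_top hn, ih]; ring

/-- Chebyshev-type bound from the primorial. -/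
lemma theta_bound (n : ℕ) :
    ∑ p ∈ Nat.primesBelow (n + 1), Real.log p ≤ n * Real.log 4 := by
  have h1 : ∑ p ∈ Nat.primesBelow (n + 1), Real.log p = Real.log (primorial n) := by
    rw [primorial, Nat.primesBelow]
    push_cast
    rw [Real.log_prod]
    intro p hp
    simp only [mem_filter, mem_range] at hp
    exact_mod_cast hp.2.pos.ne'
  rw [h1]
  calc Real.log (primorial n) ≤ Real.log ((4:ℕ) ^ n) := by
        apply Real.log_le_log (by exact_mod_cast (primorial_pos n))
        exact_mod_cast primorial_le_4_pow n
    _ = n * Real.log 4 := by push_cast; rw [Real.log_pow]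

/-- Mertens' first theorem (upper bound). -/
lemma mertens1 (n : ℕ) (hn : 1 ≤ n) :
    ∑ p ∈ Nat.primesBelow (n + 1), Real.log p / p ≤ Real.log n + Real.log 4 := by
  have hnpos : (0:ℝ) < n := by exact_mod_cast hn
  have hfac : (Nat.factorial n) ≠ 0 := (Nat.factorial_pos n).ne'
  -- each prime p ≤ n has factorization of n! at least n/p
  have hleg : ∀ p ∈ Nat.primesBelow (n + 1), (n / p : ℕ) ≤ ((Nat.factorial n)).factorization p := by
    intro p hp
    simp only [Nat.primesBelow, mem_filter, mem_range] at hp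
    obtain ⟨hpn, hpp⟩ := hp
    rw [← hpp.pow_dvd_iff_le_factorization hfac]
    rw [hpp.pow_dvd_factorial_iff (b := Nat.log p n + 1) (Nat.lt_succ_self _)]
    have h1m : 1 ∈ Ico 1 (Nat.log p n + 1) := by
      simp only [mem_Ico]
      have : 0 < Nat.log p n := Nat.log_pos hpp.one_lt (by omega)
      omega
    calc n / p = n / p ^ 1 := by rw [pow_one]
      _ ≤ ∑ i ∈ Ico 1 (Nat.log p n + 1), n / p ^ i :=
          Finset.single_le_sum (f := fun i => n / p ^ i) (fun i _ => Nat.zero_le _) h1m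
  -- log n! decomposition
  have hlog : ∑ p ∈ Nat.primesBelow (n + 1), ((n / p : ℕ) : ℝ) * Real.log p
      ≤ Real.log ((Nat.factorial n)) := by
    have hexp : Real.log ((Nat.factorial n)) =
        ∑ p ∈ ((Nat.factorial n)).primeFactors, (((Nat.factorial n)).factorization p : ℝ) * Real.log p := by
      conv_lhs => rw [← Nat.factorization_prod_pow_eq_self hfac]
      rw [Finsupp.prod, Nat.support_factorization]
      push_cast
      rw [Real.log_prod]
      · apply Finset.sum_congr rfl
        intro p hp
        rw [Real.log_pow]
      · intro p hp
        have := (Nat.prime_of_mem_primeFactors hp).pos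
        positivity
    rw [hexp]
    calc ∑ p ∈ Nat.primesBelow (n + 1), ((n / p : ℕ) : ℝ) * Real.log p
        ≤ ∑ p ∈ Nat.primesBelow (n + 1), ((Nat.factorial n).factorization p : ℝ) * Real.log p := by
          apply Finset.sum_le_sum
          intro p hp
          have hprime : p.Prime := (Nat.mem_primesBelow.mp hp).2
          have hlogp : (0:ℝ) ≤ Real.log p := Real.log_natCast_nonneg p
          have := hleg p hp
          apply mul_le_mul_of_nonneg_right _ hlogp
          exact_mod_cast this
      _ ≤ ∑ p ∈ (Nat.factorial n).primeFactors, ((Nat.factorial n).factorization p : ℝ) * Real.log p := by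
          apply Finset.sum_le_sum_of_subset_of_nonneg
          · intro p hp
            rw [Nat.mem_primesBelow] at hp
            exact Nat.mem_primeFactors.mpr ⟨hp.2, Nat.dvd_factorial hp.2.pos (by omega), hfac⟩
          · intro p _ _
            have := Real.log_natCast_nonneg p
            positivity
  -- put things together
  have hstep : (n:ℝ) * (∑ p ∈ Nat.primesBelow (n + 1), Real.log p / p)
      ≤ (n:ℝ) * Real.log n + (n:ℝ) * Real.log 4 := by
    have hsplit : ∀ p ∈ Nat.primesBelow (n + 1),
        (n:ℝ) * (Real.log p / p) ≤ ((n / p : ℕ) : ℝ) * Real.log p + Real.log p := by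
      intro p hp
      have hprime : p.Prime := (Nat.mem_primesBelow.mp hp).2
      have hppos : (0:ℝ) < p := by exact_mod_cast hprime.pos
      have hlogp : (0:ℝ) ≤ Real.log p := Real.log_natCast_nonneg p
      have hdiv : (n:ℝ) / p ≤ ((n / p : ℕ) : ℝ) + 1 := by
        rw [div_le_iff₀ hppos]
        have h1 : n < p * (n / p) + p := by
          have := Nat.div_add_mod n p
          have := Nat.mod_lt n hprime.pos
          omega
        have : (n:ℝ) < (p:ℝ) * ((n / p : ℕ) : ℝ) + p := by exact_mod_cast h1
        nlinarith
      calc (n:ℝ) * (Real.log p / p) = ((n:ℝ) / p) * Real.log p := by ring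
        _ ≤ (((n / p : ℕ) : ℝ) + 1) * Real.log p := mul_le_mul_of_nonneg_right hdiv hlogp
        _ = ((n / p : ℕ) : ℝ) * Real.log p + Real.log p := by ring
    calc (n:ℝ) * (∑ p ∈ Nat.primesBelow (n + 1), Real.log p / p)
        = ∑ p ∈ Nat.primesBelow (n + 1), (n:ℝ) * (Real.log p / p) := Finset.mul_sum _ _ _
      _ ≤ ∑ p ∈ Nat.primesBelow (n + 1), (((n / p : ℕ) : ℝ) * Real.log p + Real.log p) :=
          Finset.sum_le_sum hsplit
      _ = (∑ p ∈ Nat.primesBelow (n + 1), ((n / p : ℕ) : ℝ) * Real.log p)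
          + ∑ p ∈ Nat.primesBelow (n + 1), Real.log p := Finset.sum_add_distrib
      _ ≤ Real.log (Nat.factorial n) + (n:ℝ) * Real.log 4 :=
          add_le_add hlog (theta_bound n)
      _ ≤ (n:ℝ) * Real.log n + (n:ℝ) * Real.log 4 := by
          have h1 : (Nat.factorial n : ℝ) ≤ ((n:ℕ) ^ n : ℕ) := by
            exact_mod_cast Nat.factorial_le_pow n
          have h2 : Real.log (Nat.factorial n) ≤ Real.log ((n:ℕ) ^ n : ℕ) :=
            Real.log_le_log (by exact_mod_cast Nat.factorial_pos n) h1
          have h3 : Real.log (((n:ℕ) ^ n : ℕ) : ℝ) = n * Real.log n := by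
            push_cast
            rw [Real.log_pow]
          linarith
  exact (mul_le_mul_iff_right₀ hnpos).mp (hstep.trans_eq (by ring))


lemma sum_Icc_eq_primesBelow (n : ℕ) (g : ℕ → ℝ) :
    ∑ m ∈ Icc 2 n, (if m.Prime then g m else 0) = ∑ p ∈ Nat.primesBelow (n + 1), g p := by
  rw [Nat.primesBelow, Finset.sum_filter]
  apply Finset.sum_subset
  · intro m hm; simp only [mem_Icc] at hm; simp only [mem_range]; omega
  · intro m hm hnot
    simp only [mem_range] at hm
    simp only [mem_Icc] at hnot
    have : ¬ m.Prime := fun hp => hnot ⟨hp.two_le, by omega⟩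
    simp [this]

lemma one_sub_div_le_log_sub {a b : ℝ} (h0 : 0 < a) (hab : a ≤ b) :
    1 - a / b ≤ Real.log b - Real.log a := by
  have hb : 0 < b := lt_of_lt_of_le h0 hab
  have h1 : Real.log (a / b) ≤ a / b - 1 := Real.log_le_sub_one_of_pos (by positivity)
  rw [Real.log_div h0.ne' hb.ne'] at h1
  linarith

/-- Mertens' second theorem (upper bound). -/
lemma mertens2 (N : ℕ) (hN : 2 ≤ N) :
    ∑ p ∈ Nat.primesBelow (N + 1), (1:ℝ) / p
      ≤ Real.log (Real.log N) + (7 - Real.log (Real.log 2)) := by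
  have hlog2 : (0:ℝ) < Real.log 2 := Real.log_pos (by norm_num)
  have hlogj : ∀ j : ℕ, 2 ≤ j → (0:ℝ) < Real.log j := by
    intro j hj
    have : (2:ℝ) ≤ j := by exact_mod_cast hj
    exact Real.log_pos (by linarith)
  have hlog4 : Real.log 4 = 2 * Real.log 2 := by
    rw [show (4:ℝ) = 2^2 by norm_num, Real.log_pow]; push_cast; ring
  have hlog4' : (0:ℝ) ≤ Real.log 4 := by linarith
  set a : ℕ → ℝ := fun m => if m.Prime then Real.log m / m else 0 with ha
  have ha_nonneg : ∀ m, 0 ≤ a m := by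
    intro m
    simp only [ha]
    split
    · rename_i hm
      have h1 : (0:ℝ) ≤ Real.log m := Real.log_natCast_nonneg m
      have h2 : (0:ℝ) < m := by exact_mod_cast hm.pos
      positivity
    · exact le_refl 0
  have hA : ∀ j : ℕ, 1 ≤ j → ∑ m ∈ Icc 2 j, a m ≤ Real.log j + Real.log 4 := by
    intro j hj
    rw [ha, sum_Icc_eq_primesBelow j (fun p => Real.log p / p)]
    exact mertens1 j hj
  set f : ℕ → ℝ := fun j => -(1 / Real.log j) with hf
  set d : ℕ → ℝ := fun j => f (j + 1) - f j with hd
  have hd_eq : ∀ j : ℕ, d j = 1 / Real.log j - 1 / Real.log (j + 1 : ℕ) := by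
    intro j; simp only [hd, hf]; ring
  have hd_nonneg : ∀ j : ℕ, 2 ≤ j → 0 ≤ d j := by
    intro j hj
    rw [hd_eq]
    have h1 : (0:ℝ) < Real.log j := hlogj j hj
    have h2 : Real.log (j : ℕ) ≤ Real.log ((j+1 : ℕ)) := by
      apply Real.log_le_log (by positivity)
      exact_mod_cast Nat.le_succ j
    have h3 : (0:ℝ) < Real.log ((j+1:ℕ)) := lt_of_lt_of_le h1 h2
    rw [sub_nonneg]
    exact div_le_div_of_nonneg_left (by norm_num) h1 h2
  -- rewrite the prime sum
  have hmain : ∑ p ∈ Nat.primesBelow (N + 1), (1:ℝ) / p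
      = ∑ m ∈ Icc 2 N, a m * (1 / Real.log N) + ∑ m ∈ Icc 2 N, ∑ j ∈ Ico m N, a m * d j := by
    rw [← sum_Icc_eq_primesBelow N (fun p => (1:ℝ)/p), ← Finset.sum_add_distrib]
    apply Finset.sum_congr rfl
    intro m hm
    simp only [mem_Icc] at hm
    have htel : ∑ j ∈ Ico m N, d j = f N - f m := tele f hm.2
    have : ∑ j ∈ Ico m N, a m * d j = a m * (f N - f m) := by
      rw [← Finset.mul_sum, htel]
    rw [this]
    have hfm : a m * (1 / Real.log N) + a m * (f N - f m)
        = a m * (1 / Real.log m) := by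
      simp only [hf]; ring
    rw [hfm]
    simp only [ha]
    split
    · rename_i hm2
      have h1 : Real.log m ≠ 0 := (hlogj m hm.1).ne'
      rw [div_mul_div_comm, mul_one, mul_comm ((m:ℝ)) (Real.log m), ← div_div, div_self h1]
    · simp
  rw [hmain]
  -- first piece
  have hfirst : ∑ m ∈ Icc 2 N, a m * (1 / Real.log N) ≤ 3 := by
    rw [← Finset.sum_mul]
    have h1 : (0:ℝ) < Real.log N := hlogj N hN
    have h2 : ∑ m ∈ Icc 2 N, a m ≤ Real.log N + Real.log 4 := hA N (by omega)
    have h3 : (∑ m ∈ Icc 2 N, a m) * (1 / Real.log N) ≤ (Real.log N + Real.log 4) * (1 / Real.log N) := by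
      apply mul_le_mul_of_nonneg_right h2 (by positivity)
    refine h3.trans ?_
    have h4 : Real.log 2 ≤ Real.log N := by
      apply Real.log_le_log (by norm_num)
      exact_mod_cast hN
    have h5 : Real.log 4 / Real.log N ≤ Real.log 4 / Real.log 2 :=
      div_le_div_of_nonneg_left hlog4' hlog2 h4
    have h6 : Real.log 4 / Real.log 2 = 2 := by rw [hlog4]; field_simp
    have h7 : (Real.log N + Real.log 4) * (1 / Real.log N) = 1 + Real.log 4 / Real.log N := by
      field_simp
    rw [h7]
    linarith
  -- second piece : swap
  have hswap : ∑ m ∈ Icc 2 N, ∑ j ∈ Ico m N, a m * d j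
      = ∑ j ∈ Ico 2 N, (∑ m ∈ Icc 2 j, a m) * d j := by
    rw [Finset.sum_comm' (s' := fun j => Icc 2 j) (t' := Ico 2 N)
      (by intro m j; simp only [mem_Icc, mem_Ico]; omega)]
    apply Finset.sum_congr rfl
    intro j _
    rw [Finset.sum_mul]
  rw [hswap]
  have hsecond : ∑ j ∈ Ico 2 N, (∑ m ∈ Icc 2 j, a m) * d j
      ≤ (Real.log (Real.log N) - Real.log (Real.log 2)) + 2 := by
    have hstep1 : ∑ j ∈ Ico 2 N, (∑ m ∈ Icc 2 j, a m) * d j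
        ≤ ∑ j ∈ Ico 2 N, (Real.log j + Real.log 4) * d j := by
      apply Finset.sum_le_sum
      intro j hj
      simp only [mem_Ico] at hj
      exact mul_le_mul_of_nonneg_right (hA j (by omega)) (hd_nonneg j hj.1)
    refine hstep1.trans ?_
    have hsplit : ∑ j ∈ Ico 2 N, (Real.log j + Real.log 4) * d j
        = ∑ j ∈ Ico 2 N, Real.log j * d j + Real.log 4 * ∑ j ∈ Ico 2 N, d j := by
      rw [Finset.mul_sum, ← Finset.sum_add_distrib]
      apply Finset.sum_congr rfl
      intro j _
      ring
    rw [hsplit]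
    have htel2 : ∑ j ∈ Ico 2 N, d j = f N - f 2 := tele f hN
    have hpart2 : Real.log 4 * ∑ j ∈ Ico 2 N, d j ≤ 2 := by
      rw [htel2]
      have h1 : (0:ℝ) < Real.log N := hlogj N hN
      have : f N - f 2 ≤ 1 / Real.log 2 := by
        simp only [hf]
        have : (0:ℝ) ≤ 1 / Real.log N := le_of_lt (one_div_pos.mpr h1)
        have h2eq : ((2:ℕ):ℝ) = (2:ℝ) := by norm_num
        rw [h2eq]
        linarith
      calc Real.log 4 * (f N - f 2) ≤ Real.log 4 * (1 / Real.log 2) :=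
            mul_le_mul_of_nonneg_left this hlog4'
        _ = Real.log 4 / Real.log 2 := by ring
        _ = 2 := by rw [hlog4]; field_simp
    have hpart1 : ∑ j ∈ Ico 2 N, Real.log j * d j
        ≤ Real.log (Real.log N) - Real.log (Real.log 2) := by
      set g : ℕ → ℝ := fun j => Real.log (Real.log j) with hg
      have hpoint : ∀ j ∈ Ico 2 N, Real.log j * d j ≤ g (j+1) - g j := by
        intro j hj
        simp only [mem_Ico] at hj
        have h1 : (0:ℝ) < Real.log j := hlogj j hj.1
        have h2 : Real.log (j:ℕ) ≤ Real.log ((j+1:ℕ)) := by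
          apply Real.log_le_log (by exact_mod_cast (by omega : 0 < j))
          exact_mod_cast Nat.le_succ j
        have h3 : (0:ℝ) < Real.log ((j+1:ℕ)) := lt_of_lt_of_le h1 h2
        have key := one_sub_div_le_log_sub h1 h2
        have heq : Real.log j * d j = 1 - Real.log (j:ℕ) / Real.log ((j+1:ℕ)) := by
          rw [hd_eq]
          field_simp
        rw [heq]
        simpa only [hg] using key
      calc ∑ j ∈ Ico 2 N, Real.log j * d j ≤ ∑ j ∈ Ico 2 N, (g (j+1) - g j) :=
            Finset.sum_le_sum hpoint
        _ = g N - g 2 := tele g hN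
        _ = Real.log (Real.log N) - Real.log (Real.log 2) := by
            simp only [hg]
            norm_num
    linarith
  linarith


lemma harmonic_Icc (M : ℕ) : ∑ m ∈ Icc 1 M, (1:ℝ)/m ≤ 1 + Real.log M := by
  induction M with
  | zero => simp
  | succ M ih =>
    rcases Nat.eq_zero_or_pos M with rfl | hM
    · norm_num
    · rw [← Finset.Ico_add_one_right_eq_Icc, Finset.sum_Ico_succ_top (by omega), Finset.Ico_add_one_right_eq_Icc]
      have h1 : (0:ℝ) < M := by exact_mod_cast hM
      have h2 : (M:ℝ) ≤ ((M+1:ℕ):ℝ) := by push_cast; linarith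
      have key := one_sub_div_le_log_sub h1 h2
      have heq : 1 - (M:ℝ)/((M+1:ℕ):ℝ) = 1/((M+1:ℕ):ℝ) := by
        have hne : ((M+1:ℕ):ℝ) ≠ 0 := by positivity
        field_simp
        push_cast; ring
      rw [heq] at key
      push_cast at key ⊢
      linarith

lemma sum_inv_sq_Ico {a : ℕ} (ha : 1 ≤ a) (N : ℕ) :
    ∑ m ∈ Ico (a+1) N, (1:ℝ)/(m:ℝ)^2 ≤ 1/a := by
  have hapos : (0:ℝ) < a := by exact_mod_cast ha
  rcases le_or_gt N (a+1) with h | h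
  · rw [Ico_eq_empty (by omega), Finset.sum_empty]
    positivity
  · set f : ℕ → ℝ := fun i => -(1/((i:ℝ)-1)) with hf
    have key : ∑ m ∈ Ico (a+1) N, (1:ℝ)/(m:ℝ)^2 ≤ ∑ m ∈ Ico (a+1) N, (f (m+1) - f m) := by
      apply Finset.sum_le_sum
      intro m hm
      simp only [mem_Ico] at hm
      have hm2 : (2:ℝ) ≤ (m:ℝ) := by exact_mod_cast (by omega : 2 ≤ m)
      simp only [hf]
      push_cast
      have h1 : (0:ℝ) < (m:ℝ) - 1 := by linarith
      have h0 : (0:ℝ) < (m:ℝ) := by linarith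
      have heq : -(1/((m:ℝ) + 1 - 1)) - (-(1/((m:ℝ)-1))) = 1/(((m:ℝ)-1) * m) := by
        field_simp
        have e : (m:ℝ) + 1 - 1 = m := by ring
        rw [e, div_eq_mul_inv, mul_sub, mul_neg, ← mul_assoc, mul_comm (m:ℝ) (m-1), mul_assoc,
          mul_inv_cancel₀ h0.ne']
        ring
      rw [heq]
      apply one_div_le_one_div_of_le (by positivity)
      nlinarith
    have htel : ∑ m ∈ Ico (a+1) N, (f (m+1) - f m) = f N - f (a+1) := tele f (by omega)
    rw [htel] at key
    simp only [hf] at key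
    have hN2 : (2:ℝ) ≤ (N:ℝ) := by exact_mod_cast (by omega : 2 ≤ N)
    have hNpos : (0:ℝ) < (N:ℝ) - 1 := by linarith
    have hpos : (0:ℝ) ≤ 1/((N:ℝ)-1) := by positivity
    have hcast : ((a+1:ℕ):ℝ) - 1 = (a:ℝ) := by push_cast; ring
    rw [hcast] at key
    linarith

lemma sum_inv_sq_gt {y : ℝ} (hy : 1 ≤ y) (N : ℕ) :
    ∑ m ∈ (range N).filter (fun m : ℕ => y < (m:ℝ)), (1:ℝ)/(m:ℝ)^2 ≤ 2/y := by
  set a := ⌊y⌋₊ with hadef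
  have ha1 : 1 ≤ a := Nat.le_floor (by exact_mod_cast hy)
  have hsub : (range N).filter (fun m : ℕ => y < (m:ℝ)) ⊆ Ico (a+1) N := by
    intro m hm
    simp only [mem_filter, mem_range] at hm
    simp only [mem_Ico]
    have : a < m := (Nat.floor_lt (by linarith)).mpr hm.2
    omega
  calc ∑ m ∈ (range N).filter (fun m : ℕ => y < (m:ℝ)), (1:ℝ)/(m:ℝ)^2
      ≤ ∑ m ∈ Ico (a+1) N, (1:ℝ)/(m:ℝ)^2 :=
        Finset.sum_le_sum_of_subset_of_nonneg hsub (by intros; positivity)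
    _ ≤ 1/a := sum_inv_sq_Ico ha1 N
    _ ≤ 2/y := by
      have h1 : y < a + 1 := Nat.lt_floor_add_one y
      have h2 : (1:ℝ) ≤ a := by exact_mod_cast ha1
      rw [div_le_div_iff₀ (by positivity) (by linarith)]
      linarith

lemma sum_inv_sq_all (N : ℕ) : ∑ m ∈ range N, (1:ℝ)/(m:ℝ)^2 ≤ 2 := by
  rcases le_or_gt N 2 with h | h
  · interval_cases N <;> norm_num
  · rw [range_eq_Ico, ← Finset.sum_Ico_consecutive _ (show (0:ℕ) ≤ 2 by omega) (le_of_lt h)]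
    have h1 : ∑ m ∈ Ico (0:ℕ) 2, (1:ℝ)/(m:ℝ)^2 = 1 := by
      rw [show Ico 0 2 = range 2 by rw [range_eq_Ico], Finset.sum_range_succ,
        Finset.sum_range_succ, Finset.sum_range_zero]
      norm_num
    have h2 : ∑ m ∈ Ico 2 N, (1:ℝ)/(m:ℝ)^2 ≤ 1 := by
      simpa using sum_inv_sq_Ico (le_refl 1) N
    linarith


/-- For squarefree `n`, `∑_{dm=n} (B-1)^{ω(d)} = B^{ω(n)}`. -/
lemma conv_identity (B : ℝ) {n : ℕ} (hn : Squarefree n) :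
    ∑ p ∈ n.divisorsAntidiagonal, (B - 1) ^ p.1.primeFactors.card
      = B ^ n.primeFactors.card := by
  have h0 : n ≠ 0 := hn.ne_zero
  rw [Nat.sum_divisorsAntidiagonal (fun d e => (B-1) ^ d.primeFactors.card)]
  have hbij : ∑ d ∈ n.divisors, (B - 1) ^ d.primeFactors.card
      = ∑ S ∈ n.primeFactors.powerset, (B - 1) ^ S.card := by
    apply Finset.sum_nbij' (i := fun d => d.primeFactors) (j := fun S => ∏ p ∈ S, p)
    · intro d hd
      rw [Finset.mem_powerset]
      exact Nat.primeFactors_mono (Nat.mem_divisors.mp hd).1 h0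
    · intro S hS
      rw [Finset.mem_powerset] at hS
      rw [Nat.mem_divisors]
      refine ⟨?_, h0⟩
      calc ∏ p ∈ S, p ∣ ∏ p ∈ n.primeFactors, p := Finset.prod_dvd_prod_of_subset _ _ _ hS
        _ = n := Nat.prod_primeFactors_of_squarefree hn
    · intro d hd
      exact Nat.prod_primeFactors_of_squarefree
        (hn.squarefree_of_dvd (Nat.mem_divisors.mp hd).1)
    · intro S hS
      rw [Finset.mem_powerset] at hS
      exact Nat.primeFactors_prod (fun p hp => Nat.prime_of_mem_primeFactors (hS hp))
    · intro d _
      rfl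
  rw [hbij]
  have hprod := Finset.prod_add (fun _ : ℕ => B - 1) (fun _ : ℕ => 1) n.primeFactors
  simp only [sub_add_cancel, Finset.prod_const, Finset.prod_const_one, one_pow, mul_one] at hprod
  rw [← hprod]

/-- Convolution bound: unfold `B^ω` as a Dirichlet convolution and bound by the rectangle. -/
lemma conv_le (B : ℝ) (hB : 1 ≤ B) (e : ℕ) (cond : ℕ → Prop) [DecidablePred cond] (N : ℕ) :
    ∑ n ∈ (range N).filter (fun n : ℕ => Squarefree n ∧ cond n),
        B ^ n.primeFactors.card / (n:ℝ)^e
      ≤ ∑ d ∈ (range N).filter (fun d => Squarefree d),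
          ((B - 1) ^ d.primeFactors.card / (d:ℝ)^e *
            ∑ m ∈ (range N).filter (fun m => cond (d * m)), 1/(m:ℝ)^e) := by
  have hB0 : 0 ≤ B - 1 := by linarith
  set f : ℕ × ℕ → ℝ := fun p => (B-1) ^ p.1.primeFactors.card / ((p.1:ℝ)^e * (p.2:ℝ)^e)
    with hfdef
  have hf0 : ∀ p : ℕ × ℕ, 0 ≤ f p := by
    intro p
    simp only [hfdef]
    positivity
  set s := (range N).filter (fun n : ℕ => Squarefree n ∧ cond n) with hs
  -- step 1 : pointwise identity
  have hstep1 : ∑ n ∈ s, B ^ n.primeFactors.card / (n:ℝ)^e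
      = ∑ n ∈ s, ∑ p ∈ n.divisorsAntidiagonal, f p := by
    apply Finset.sum_congr rfl
    intro n hn
    simp only [hs, mem_filter, mem_range] at hn
    obtain ⟨hnN, hsq, _⟩ := hn
    rw [← conv_identity B hsq, Finset.sum_div]
    apply Finset.sum_congr rfl
    intro p hp
    rw [Nat.mem_divisorsAntidiagonal] at hp
    simp only [hfdef]
    congr 1
    rw [← mul_pow]
    congr 1
    exact_mod_cast congrArg (fun t : ℕ => (t:ℝ)) hp.1.symm
  -- step 2 : biUnion
  have hdisj : (s : Set ℕ).PairwiseDisjoint (fun n => n.divisorsAntidiagonal) := by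
    intro n₁ _ n₂ _ hne
    simp only [Function.onFun, Finset.disjoint_left]
    intro p hp1 hp2
    rw [Nat.mem_divisorsAntidiagonal] at hp1 hp2
    exact hne (hp1.1.symm.trans hp2.1)
  have hstep2 : ∑ n ∈ s, ∑ p ∈ n.divisorsAntidiagonal, f p
      = ∑ p ∈ s.biUnion (fun n => n.divisorsAntidiagonal), f p :=
    (Finset.sum_biUnion hdisj).symm
  -- step 3 : containment in the rectangle
  set T := ((range N) ×ˢ (range N)).filter (fun p : ℕ × ℕ => Squarefree p.1 ∧ cond (p.1 * p.2))
    with hT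
  have hsub : s.biUnion (fun n => n.divisorsAntidiagonal) ⊆ T := by
    intro p hp
    rw [Finset.mem_biUnion] at hp
    obtain ⟨n, hn, hpn⟩ := hp
    simp only [hs, mem_filter, mem_range] at hn
    obtain ⟨hnN, hsq, hcond⟩ := hn
    rw [Nat.mem_divisorsAntidiagonal] at hpn
    obtain ⟨hpeq, hne⟩ := hpn
    have hp1 : p.1 ∣ n := ⟨p.2, hpeq.symm⟩
    have hp2 : p.2 ∣ n := ⟨p.1, by rw [← hpeq]; ring⟩
    have hp1le : p.1 ≤ n := Nat.le_of_dvd (Nat.pos_of_ne_zero hne) hp1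
    have hp2le : p.2 ≤ n := Nat.le_of_dvd (Nat.pos_of_ne_zero hne) hp2
    simp only [hT, mem_filter, Finset.mem_product, mem_range]
    refine ⟨⟨by omega, by omega⟩, hsq.squarefree_of_dvd hp1, ?_⟩
    rw [hpeq]
    exact hcond
  have hstep3 : ∑ p ∈ s.biUnion (fun n => n.divisorsAntidiagonal), f p ≤ ∑ p ∈ T, f p :=
    Finset.sum_le_sum_of_subset_of_nonneg hsub (fun p _ _ => hf0 p)
  -- step 4 : rectangle sum equals RHS
  have hstep4 : ∑ p ∈ T, f p
      = ∑ d ∈ (range N).filter (fun d => Squarefree d),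
          ((B - 1) ^ d.primeFactors.card / (d:ℝ)^e *
            ∑ m ∈ (range N).filter (fun m => cond (d * m)), 1/(m:ℝ)^e) := by
    rw [hT, Finset.sum_filter, Finset.sum_product]
    rw [Finset.sum_filter]
    apply Finset.sum_congr rfl
    intro d _
    rw [Finset.mul_sum, Finset.sum_filter]
    by_cases hsq : Squarefree d
    · simp only [hsq, true_and, if_true]
      apply Finset.sum_congr rfl
      intro m _
      by_cases hc : cond (d * m)
      · simp only [hc, if_true, hfdef]
        rw [div_mul_div_comm, mul_one]
      · simp only [hc, if_false, mul_zero]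
    · simp only [hsq, false_and, if_false]
      rw [Finset.sum_eq_zero]
      intro m _
      simp only [if_neg hsq]
  calc ∑ n ∈ s, B ^ n.primeFactors.card / (n:ℝ)^e
      = ∑ p ∈ s.biUnion (fun n => n.divisorsAntidiagonal), f p := by rw [hstep1, hstep2]
    _ ≤ ∑ p ∈ T, f p := hstep3
    _ = _ := hstep4


lemma harmonic_filter_le {x : ℝ} (hx : 1 ≤ x) (N : ℕ) :
    ∑ m ∈ (range N).filter (fun m : ℕ => (m:ℝ) ≤ x), (1:ℝ)/m ≤ 1 + Real.log x := by
  have h1 : (range N).filter (fun m : ℕ => (m:ℝ) ≤ x) ⊆ Icc 0 ⌊x⌋₊ := by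
    intro m hm
    simp only [mem_filter, mem_range] at hm
    simp only [mem_Icc]
    exact ⟨Nat.zero_le m, Nat.le_floor hm.2⟩
  have h2 : ∑ m ∈ (range N).filter (fun m : ℕ => (m:ℝ) ≤ x), (1:ℝ)/m
      ≤ ∑ m ∈ Icc 0 ⌊x⌋₊, (1:ℝ)/m :=
    Finset.sum_le_sum_of_subset_of_nonneg h1 (by intros; positivity)
  have h3 : Icc 0 ⌊x⌋₊ = insert 0 (Icc 1 ⌊x⌋₊) := by
    ext m
    simp only [mem_Icc, Finset.mem_insert]
    omega
  have h4 : ∑ m ∈ Icc 0 ⌊x⌋₊, (1:ℝ)/m = ∑ m ∈ Icc 1 ⌊x⌋₊, (1:ℝ)/m := by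
    rw [h3, Finset.sum_insert (by simp)]
    norm_num
  have hfl1 : 1 ≤ ⌊x⌋₊ := Nat.le_floor (by exact_mod_cast hx)
  have h5 : Real.log ⌊x⌋₊ ≤ Real.log x := by
    apply Real.log_le_log (by exact_mod_cast hfl1)
    exact Nat.floor_le (by linarith)
  have h6 := harmonic_Icc ⌊x⌋₊
  linarith

/-- Sum over squarefree `d ≤ x` dominated by the Euler-type product. -/
lemma sqfree_sum_le_prod {lam : ℝ} (hlam0 : 0 ≤ lam) (N : ℕ) {x : ℝ} (hx : 1 ≤ x) :
    ∑ d ∈ (range N).filter (fun d : ℕ => Squarefree d ∧ (d:ℝ) ≤ x),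
        lam ^ d.primeFactors.card / d
      ≤ ∏ p ∈ Nat.primesBelow (⌊x⌋₊ + 1), (1 + lam / p) := by
  set s := (range N).filter (fun d : ℕ => Squarefree d ∧ (d:ℝ) ≤ x) with hs
  set G : Finset ℕ → ℝ := fun S => ∏ p ∈ S, (lam / p) with hG
  have hterm : ∀ d ∈ s, lam ^ d.primeFactors.card / d = G d.primeFactors := by
    intro d hd
    simp only [hs, mem_filter] at hd
    simp only [hG]
    rw [Finset.prod_div_distrib, Finset.prod_const]
    congr 1
    rw [← Nat.cast_prod]
    exact_mod_cast congrArg (fun t : ℕ => (t:ℝ)) (Nat.prod_primeFactors_of_squarefree hd.2.1).symm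
  rw [Finset.sum_congr rfl hterm]
  have hinj : ∀ d ∈ s, ∀ d' ∈ s, d.primeFactors = d'.primeFactors → d = d' := by
    intro d hd d' hd' heq
    simp only [hs, mem_filter] at hd hd'
    rw [← Nat.prod_primeFactors_of_squarefree hd.2.1,
      ← Nat.prod_primeFactors_of_squarefree hd'.2.1, heq]
  have himg : ∑ d ∈ s, G d.primeFactors = ∑ S ∈ s.image Nat.primeFactors, G S :=
    (Finset.sum_image hinj).symm
  rw [himg]
  have hsub : s.image Nat.primeFactors ⊆ (Nat.primesBelow (⌊x⌋₊ + 1)).powerset := by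
    intro S hS
    rw [Finset.mem_image] at hS
    obtain ⟨d, hd, rfl⟩ := hS
    simp only [hs, mem_filter] at hd
    rw [Finset.mem_powerset]
    intro p hp
    have hdpos : 0 < d := hd.2.1.ne_zero |> Nat.pos_of_ne_zero
    have hple : p ≤ d := Nat.le_of_dvd hdpos (Nat.dvd_of_mem_primeFactors hp)
    have hdfl : d ≤ ⌊x⌋₊ := Nat.le_floor hd.2.2
    rw [Nat.mem_primesBelow]
    exact ⟨by omega, Nat.prime_of_mem_primeFactors hp⟩
  have hGnn : ∀ S : Finset ℕ, 0 ≤ G S := by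
    intro S
    apply Finset.prod_nonneg
    intro p _
    positivity
  have hmono : ∑ S ∈ s.image Nat.primeFactors, G S
      ≤ ∑ S ∈ (Nat.primesBelow (⌊x⌋₊ + 1)).powerset, G S :=
    Finset.sum_le_sum_of_subset_of_nonneg hsub (fun S _ _ => hGnn S)
  refine hmono.trans ?_
  have hprod := Finset.prod_add (fun p : ℕ => lam / p) (fun _ : ℕ => 1)
    (Nat.primesBelow (⌊x⌋₊ + 1))
  simp only [Finset.prod_const_one, one_pow, mul_one] at hprod
  have hcomm : ∏ p ∈ Nat.primesBelow (⌊x⌋₊ + 1), (1 + lam / (p:ℝ))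
      = ∏ p ∈ Nat.primesBelow (⌊x⌋₊ + 1), (lam / (p:ℝ) + 1) :=
    Finset.prod_congr rfl (fun p _ => add_comm _ _)
  rw [hcomm, hprod]

/-- The Euler-type product is `O((log 3x)^λ)` for `0 ≤ λ ≤ 1`. -/
lemma prod_le_L {lam : ℝ} (hlam0 : 0 ≤ lam) (hlam1 : lam ≤ 1) {x : ℝ} (hx : 2 ≤ x) :
    ∏ p ∈ Nat.primesBelow (⌊x⌋₊ + 1), (1 + lam / p)
      ≤ Real.exp (7 - Real.log (Real.log 2)) * Real.log (3*x) ^ lam := by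
  have hL1 : (1:ℝ) < Real.log (3*x) := by
    rw [← Real.log_exp 1]
    apply Real.log_lt_log (Real.exp_pos 1)
    calc Real.exp 1 < 2.7182818286 := Real.exp_one_lt_d9
      _ ≤ 3 * x := by linarith
  have hL0 : (0:ℝ) < Real.log (3*x) := by linarith
  have h1 : ∏ p ∈ Nat.primesBelow (⌊x⌋₊ + 1), (1 + lam / p)
      ≤ Real.exp (∑ p ∈ Nat.primesBelow (⌊x⌋₊ + 1), lam * (1/p)) := by
    rw [Real.exp_sum]
    apply Finset.prod_le_prod
    · intro p hp
      have : (0:ℝ) ≤ (p:ℝ) := Nat.cast_nonneg p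
      positivity
    · intro p hp
      have hppos : (0:ℝ) < p := by
        exact_mod_cast (Nat.mem_primesBelow.mp hp).2.pos
      calc 1 + lam / p = lam * (1/p) + 1 := by ring
        _ ≤ Real.exp (lam * (1/p)) := Real.add_one_le_exp _
  refine h1.trans ?_
  have hfl2 : 2 ≤ ⌊x⌋₊ := Nat.le_floor (by exact_mod_cast hx)
  have hm2 := mertens2 ⌊x⌋₊ hfl2
  have hsum : ∑ p ∈ Nat.primesBelow (⌊x⌋₊ + 1), lam * (1/p)
      = lam * ∑ p ∈ Nat.primesBelow (⌊x⌋₊ + 1), (1:ℝ)/p := by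
    rw [Finset.mul_sum]
  have hlogfl : (0:ℝ) < Real.log ⌊x⌋₊ := by
    have : (2:ℝ) ≤ (⌊x⌋₊ : ℝ) := by exact_mod_cast hfl2
    exact Real.log_pos (by linarith)
  have hloglog : Real.log (Real.log ⌊x⌋₊) ≤ Real.log (Real.log (3*x)) := by
    apply Real.log_le_log hlogfl
    apply Real.log_le_log (by exact_mod_cast Nat.lt_of_lt_of_le Nat.zero_lt_two hfl2)
    calc (⌊x⌋₊ : ℝ) ≤ x := Nat.floor_le (by linarith)
      _ ≤ 3 * x := by linarith
  have hc0 : (0:ℝ) ≤ 7 - Real.log (Real.log 2) := by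
    have hlog2 : Real.log 2 < 1 := by
      rw [← Real.log_exp 1]
      apply Real.log_lt_log (by norm_num)
      calc (2:ℝ) < 2.7182818283 := by norm_num
        _ < Real.exp 1 := Real.exp_one_gt_d9
    have hlog2' : (0:ℝ) < Real.log 2 := Real.log_pos (by norm_num)
    have : Real.log (Real.log 2) < 0 := Real.log_neg hlog2' hlog2
    linarith
  have hbound : ∑ p ∈ Nat.primesBelow (⌊x⌋₊ + 1), lam * (1/p)
      ≤ lam * Real.log (Real.log (3*x)) + (7 - Real.log (Real.log 2)) := by
    rw [hsum]
    calc lam * ∑ p ∈ Nat.primesBelow (⌊x⌋₊ + 1), (1:ℝ)/p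
        ≤ lam * (Real.log (Real.log ⌊x⌋₊) + (7 - Real.log (Real.log 2))) :=
          mul_le_mul_of_nonneg_left hm2 hlam0
      _ ≤ lam * Real.log (Real.log (3*x)) + lam * (7 - Real.log (Real.log 2)) := by
          have := mul_le_mul_of_nonneg_left hloglog hlam0
          nlinarith
      _ ≤ lam * Real.log (Real.log (3*x)) + (7 - Real.log (Real.log 2)) := by
          nlinarith
  calc Real.exp (∑ p ∈ Nat.primesBelow (⌊x⌋₊ + 1), lam * (1/p))
      ≤ Real.exp (lam * Real.log (Real.log (3*x)) + (7 - Real.log (Real.log 2))) :=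
        Real.exp_le_exp.mpr hbound
    _ = Real.exp (7 - Real.log (Real.log 2)) * Real.log (3*x) ^ lam := by
        rw [Real.exp_add, Real.rpow_def_of_pos hL0, mul_comm (Real.log (Real.log (3*x))) lam]
        ring


lemma one_le_logL {x : ℝ} (hx : 1 ≤ x) : 1 ≤ Real.log (3*x) := by
  rw [← Real.log_exp 1]
  apply Real.log_le_log (Real.exp_pos 1)
  calc Real.exp 1 ≤ 2.7182818286 := le_of_lt Real.exp_one_lt_d9
    _ ≤ 3 * x := by linarith

lemma c0_pos : (0:ℝ) < 7 - Real.log (Real.log 2) := by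
  have hlog2 : Real.log 2 < 1 := by
    rw [← Real.log_exp 1]
    apply Real.log_lt_log (by norm_num)
    calc (2:ℝ) < 2.7182818283 := by norm_num
      _ < Real.exp 1 := Real.exp_one_gt_d9
  have hlog2' : (0:ℝ) < Real.log 2 := Real.log_pos (by norm_num)
  have : Real.log (Real.log 2) < 0 := Real.log_neg hlog2' hlog2
  linarith

lemma SB_base {lam : ℝ} (h0 : 0 ≤ lam) (h1 : lam ≤ 1) {x : ℝ} (hx : 1 ≤ x) (N : ℕ) :
    ∑ d ∈ (range N).filter (fun d : ℕ => Squarefree d ∧ (d:ℝ) ≤ x),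
        lam ^ d.primeFactors.card / d
      ≤ Real.exp (7 - Real.log (Real.log 2)) * Real.log (3*x) ^ lam := by
  have hL1 : (1:ℝ) ≤ Real.log (3*x) := one_le_logL hx
  have hrp1 : (1:ℝ) ≤ Real.log (3*x) ^ lam := Real.one_le_rpow hL1 h0
  have hexp1 : (1:ℝ) ≤ Real.exp (7 - Real.log (Real.log 2)) := by
    rw [← Real.exp_zero]
    exact Real.exp_le_exp.mpr c0_pos.le
  rcases le_or_gt 2 x with h2 | h2
  · exact (sqfree_sum_le_prod h0 N hx).trans (prod_le_L h0 h1 h2)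
  · have hsub : (range N).filter (fun d : ℕ => Squarefree d ∧ (d:ℝ) ≤ x) ⊆ {1} := by
      intro d hd
      simp only [mem_filter, mem_range] at hd
      have hd1 : 1 ≤ d := Nat.pos_of_ne_zero hd.2.1.ne_zero
      have : (d:ℝ) < 2 := lt_of_le_of_lt hd.2.2 h2
      have : d < 2 := by exact_mod_cast this
      simp only [Finset.mem_singleton]
      omega
    calc ∑ d ∈ (range N).filter (fun d : ℕ => Squarefree d ∧ (d:ℝ) ≤ x),
          lam ^ d.primeFactors.card / d
        ≤ ∑ d ∈ ({1} : Finset ℕ), lam ^ d.primeFactors.card / d := by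
          apply Finset.sum_le_sum_of_subset_of_nonneg hsub
          intro d _ _
          positivity
      _ = 1 := by simp
      _ ≤ Real.exp (7 - Real.log (Real.log 2)) * Real.log (3*x) ^ lam := by nlinarith

lemma logL_split {x : ℝ} (hx : 1 ≤ x) : 1 + Real.log x ≤ Real.log (3*x) := by
  have h3 : (1:ℝ) ≤ Real.log 3 := by
    rw [← Real.log_exp 1]
    apply Real.log_le_log (Real.exp_pos 1)
    calc Real.exp 1 ≤ 2.7182818286 := le_of_lt Real.exp_one_lt_d9
      _ ≤ 3 := by norm_num
  rw [Real.log_mul (by norm_num) (by linarith)]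
  linarith

lemma rpow_succ {L B : ℝ} (hL : 0 < L) : L ^ (B - 1) * L = L ^ B := by
  calc L ^ (B - 1) * L = L ^ (B - 1) * L ^ (1:ℝ) := by rw [Real.rpow_one]
    _ = L ^ (B - 1 + 1) := (Real.rpow_add hL _ _).symm
    _ = L ^ B := by norm_num

/-- inductive step for the `S`-type sums. -/
lemma s_step {B : ℝ} (hB : 1 ≤ B) {C₁ : ℝ} (hC₁ : 0 ≤ C₁)
    (hS : ∀ x : ℝ, 1 ≤ x → ∀ N : ℕ,
      ∑ d ∈ (range N).filter (fun d : ℕ => Squarefree d ∧ (d:ℝ) ≤ x),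
        (B-1) ^ d.primeFactors.card / d ≤ C₁ * Real.log (3*x) ^ (B-1))
    {x : ℝ} (hx : 1 ≤ x) (N : ℕ) :
    ∑ d ∈ (range N).filter (fun d : ℕ => Squarefree d ∧ (d:ℝ) ≤ x),
        B ^ d.primeFactors.card / d ≤ C₁ * Real.log (3*x) ^ B := by
  have hB0 : 0 ≤ B - 1 := by linarith
  have hL1 : (1:ℝ) ≤ Real.log (3*x) := one_le_logL hx
  have hL0 : (0:ℝ) < Real.log (3*x) := by linarith
  have hconv := conv_le B hB 1 (fun n : ℕ => (n:ℝ) ≤ x) N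
  simp only [pow_one] at hconv
  set F : ℕ → ℝ := fun d => (B - 1) ^ d.primeFactors.card / (d:ℝ) *
      ∑ m ∈ (range N).filter (fun m : ℕ => ((d * m : ℕ):ℝ) ≤ x), 1/(m:ℝ) with hF
  have hsplit := Finset.sum_filter_add_sum_filter_not
    ((range N).filter (fun d : ℕ => Squarefree d)) (fun d : ℕ => (d:ℝ) ≤ x) F
  rw [Finset.filter_filter, Finset.filter_filter] at hsplit
  -- the large-d part vanishes
  have hzero : ∑ d ∈ (range N).filter (fun d : ℕ => Squarefree d ∧ ¬ (d:ℝ) ≤ x), F d = 0 := by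
    apply Finset.sum_eq_zero
    intro d hd
    simp only [mem_filter, mem_range] at hd
    have hinner : ∑ m ∈ (range N).filter (fun m : ℕ => ((d * m : ℕ):ℝ) ≤ x), 1/(m:ℝ) = 0 := by
      apply Finset.sum_eq_zero
      intro m hm
      simp only [mem_filter, mem_range] at hm
      rcases Nat.eq_zero_or_pos m with rfl | hmpos
      · norm_num
      · exfalso
        apply hd.2.2
        have h1 : (d:ℝ) ≤ ((d * m : ℕ):ℝ) := by
          have hm1 : (1:ℝ) ≤ (m:ℝ) := by exact_mod_cast hmpos
          have hd0 : (0:ℝ) ≤ (d:ℝ) := Nat.cast_nonneg d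
          push_cast
          nlinarith
        linarith [hm.2]
    simp only [hF, hinner, mul_zero]
  -- the small-d part
  have hsmall : ∑ d ∈ (range N).filter (fun d : ℕ => Squarefree d ∧ (d:ℝ) ≤ x), F d
      ≤ (1 + Real.log x) * (C₁ * Real.log (3*x) ^ (B-1)) := by
    have hptwise : ∀ d ∈ (range N).filter (fun d : ℕ => Squarefree d ∧ (d:ℝ) ≤ x),
        F d ≤ (B - 1) ^ d.primeFactors.card / (d:ℝ) * (1 + Real.log x) := by
      intro d hd
      simp only [mem_filter, mem_range] at hd
      have hd1 : 1 ≤ d := Nat.pos_of_ne_zero hd.2.1.ne_zero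
      have hinner : ∑ m ∈ (range N).filter (fun m : ℕ => ((d * m : ℕ):ℝ) ≤ x), 1/(m:ℝ)
          ≤ 1 + Real.log x := by
        refine le_trans ?_ (harmonic_filter_le hx N)
        apply Finset.sum_le_sum_of_subset_of_nonneg
        · intro m hm
          simp only [mem_filter, mem_range] at hm ⊢
          refine ⟨hm.1, ?_⟩
          have h1 : (m:ℝ) ≤ ((d * m : ℕ):ℝ) := by
            have hd1' : (1:ℝ) ≤ (d:ℝ) := by exact_mod_cast hd1
            have hm0 : (0:ℝ) ≤ (m:ℝ) := Nat.cast_nonneg m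
            push_cast
            nlinarith
          linarith [hm.2]
        · intro m _ _
          positivity
      simp only [hF]
      apply mul_le_mul_of_nonneg_left hinner
      positivity
    calc ∑ d ∈ (range N).filter (fun d : ℕ => Squarefree d ∧ (d:ℝ) ≤ x), F d
        ≤ ∑ d ∈ (range N).filter (fun d : ℕ => Squarefree d ∧ (d:ℝ) ≤ x),
            ((B - 1) ^ d.primeFactors.card / (d:ℝ) * (1 + Real.log x)) :=
          Finset.sum_le_sum hptwise
      _ = (1 + Real.log x) * ∑ d ∈ (range N).filter (fun d : ℕ => Squarefree d ∧ (d:ℝ) ≤ x),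
            (B - 1) ^ d.primeFactors.card / (d:ℝ) := by
          rw [← Finset.sum_mul, mul_comm]
      _ ≤ (1 + Real.log x) * (C₁ * Real.log (3*x) ^ (B-1)) := by
          apply mul_le_mul_of_nonneg_left (hS x hx N)
          have : 0 ≤ Real.log x := Real.log_nonneg hx
          linarith
  have hfinal : ∑ d ∈ (range N).filter (fun d : ℕ => Squarefree d), F d
      ≤ C₁ * Real.log (3*x) ^ B := by
    rw [← hsplit, hzero, add_zero]
    refine hsmall.trans ?_
    have h1 : (1 + Real.log x) * (C₁ * Real.log (3*x) ^ (B-1))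
        ≤ Real.log (3*x) * (C₁ * Real.log (3*x) ^ (B-1)) := by
      apply mul_le_mul_of_nonneg_right (logL_split hx)
      have := Real.rpow_nonneg hL0.le (B-1)
      positivity
    refine h1.trans ?_
    rw [show Real.log (3*x) * (C₁ * Real.log (3*x) ^ (B-1))
        = C₁ * (Real.log (3*x) ^ (B-1) * Real.log (3*x)) by ring, rpow_succ hL0]
  exact hconv.trans hfinal


/-- Full bound for `S`-type sums: `∑_{d ≤ x, squarefree} B^ω(d)/d ≪ (log 3x)^B`. -/
lemma SB (k : ℕ) : ∀ B : ℝ, 0 ≤ B → B ≤ (k:ℝ) + 1 → ∃ C : ℝ, 0 < C ∧ ∀ x : ℝ, 1 ≤ x → ∀ N : ℕ,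
    ∑ d ∈ (range N).filter (fun d : ℕ => Squarefree d ∧ (d:ℝ) ≤ x),
        B ^ d.primeFactors.card / d ≤ C * Real.log (3*x) ^ B := by
  induction k with
  | zero =>
    intro B h0 h1
    refine ⟨Real.exp (7 - Real.log (Real.log 2)), Real.exp_pos _, fun x hx N => ?_⟩
    exact SB_base h0 (by norm_num at h1; linarith) hx N
  | succ k ih =>
    intro B h0 h1
    rcases le_or_gt B 1 with hB1 | hB1
    · exact ⟨Real.exp (7 - Real.log (Real.log 2)), Real.exp_pos _,
        fun x hx N => SB_base h0 hB1 hx N⟩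
    · obtain ⟨C₁, hC₁, hS⟩ := ih (B-1) (by linarith) (by push_cast at h1 ⊢; linarith)
      exact ⟨C₁, hC₁, fun x hx N => s_step (by linarith) hC₁.le hS hx N⟩

/-- inductive step for the tail sums. -/
lemma step_bound {B : ℝ} (hB : 1 ≤ B) {C₁ C₂ : ℝ} (hC₁ : 0 ≤ C₁) (hC₂ : 0 ≤ C₂)
    (hS : ∀ x : ℝ, 1 ≤ x → ∀ N : ℕ,
      ∑ d ∈ (range N).filter (fun d : ℕ => Squarefree d ∧ (d:ℝ) ≤ x),
        (B-1) ^ d.primeFactors.card / d ≤ C₁ * Real.log (3*x) ^ (B-1))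
    (hW : ∀ x : ℝ, 1 ≤ x → ∀ N : ℕ,
      ∑ n ∈ (range N).filter (fun n : ℕ => Squarefree n ∧ x < (n:ℝ)),
        (B-1) ^ n.primeFactors.card / (n:ℝ)^2 ≤ C₂ * Real.log (3*x) ^ (B-1) / x)
    {x : ℝ} (hx : 1 ≤ x) (N : ℕ) :
    ∑ n ∈ (range N).filter (fun n : ℕ => Squarefree n ∧ x < (n:ℝ)),
        B ^ n.primeFactors.card / (n:ℝ)^2
      ≤ (2*C₁ + 2*C₂) * Real.log (3*x) ^ (B-1) / x := by
  have hB0 : 0 ≤ B - 1 := by linarith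
  have hx0 : (0:ℝ) < x := by linarith
  have hL1 : (1:ℝ) ≤ Real.log (3*x) := one_le_logL hx
  have hL0 : (0:ℝ) < Real.log (3*x) := by linarith
  have hrp0 : (0:ℝ) ≤ Real.log (3*x) ^ (B-1) := Real.rpow_nonneg hL0.le _
  have hconv := conv_le B hB 2 (fun n : ℕ => x < (n:ℝ)) N
  set F : ℕ → ℝ := fun d => (B - 1) ^ d.primeFactors.card / (d:ℝ)^2 *
      ∑ m ∈ (range N).filter (fun m : ℕ => x < ((d * m : ℕ):ℝ)), 1/(m:ℝ)^2 with hF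
  have hsplit := Finset.sum_filter_add_sum_filter_not
    ((range N).filter (fun d : ℕ => Squarefree d)) (fun d : ℕ => (d:ℝ) ≤ x) F
  rw [Finset.filter_filter, Finset.filter_filter] at hsplit
  -- small-d branch
  have hsmall : ∑ d ∈ (range N).filter (fun d : ℕ => Squarefree d ∧ (d:ℝ) ≤ x), F d
      ≤ (2/x) * (C₁ * Real.log (3*x) ^ (B-1)) := by
    have hptwise : ∀ d ∈ (range N).filter (fun d : ℕ => Squarefree d ∧ (d:ℝ) ≤ x),
        F d ≤ (2/x) * ((B - 1) ^ d.primeFactors.card / (d:ℝ)) := by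
      intro d hd
      simp only [mem_filter, mem_range] at hd
      have hd1 : 1 ≤ d := Nat.pos_of_ne_zero hd.2.1.ne_zero
      have hd1' : (1:ℝ) ≤ (d:ℝ) := by exact_mod_cast hd1
      have hdpos : (0:ℝ) < (d:ℝ) := by linarith
      have hxd1 : (1:ℝ) ≤ x / d := by
        rw [le_div_iff₀ hdpos]
        linarith [hd.2.2]
      have hfilter_eq : (range N).filter (fun m : ℕ => x < ((d * m : ℕ):ℝ))
          = (range N).filter (fun m : ℕ => x / (d:ℝ) < (m:ℝ)) := by
        apply Finset.filter_congr
        intro m _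
        constructor
        · intro h
          rw [div_lt_iff₀ hdpos]
          push_cast at h
          linarith [h]
        · intro h
          rw [div_lt_iff₀ hdpos] at h
          push_cast
          linarith [h]
      have hinner : ∑ m ∈ (range N).filter (fun m : ℕ => x < ((d * m : ℕ):ℝ)), 1/(m:ℝ)^2
          ≤ 2 * d / x := by
        rw [hfilter_eq]
        have := sum_inv_sq_gt hxd1 N
        have heq : 2 / (x / (d:ℝ)) = 2 * d / x := by
          field_simp
        linarith [heq ▸ this]
      have halg : (B - 1) ^ d.primeFactors.card / (d:ℝ)^2 * (2 * d / x)
          = (2/x) * ((B - 1) ^ d.primeFactors.card / (d:ℝ)) := by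
        field_simp
      calc F d ≤ (B - 1) ^ d.primeFactors.card / (d:ℝ)^2 * (2 * d / x) := by
            simp only [hF]
            apply mul_le_mul_of_nonneg_left hinner
            positivity
        _ = (2/x) * ((B - 1) ^ d.primeFactors.card / (d:ℝ)) := halg
    calc ∑ d ∈ (range N).filter (fun d : ℕ => Squarefree d ∧ (d:ℝ) ≤ x), F d
        ≤ ∑ d ∈ (range N).filter (fun d : ℕ => Squarefree d ∧ (d:ℝ) ≤ x),
            (2/x) * ((B - 1) ^ d.primeFactors.card / (d:ℝ)) := Finset.sum_le_sum hptwise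
      _ = (2/x) * ∑ d ∈ (range N).filter (fun d : ℕ => Squarefree d ∧ (d:ℝ) ≤ x),
            (B - 1) ^ d.primeFactors.card / (d:ℝ) := by rw [← Finset.mul_sum]
      _ ≤ (2/x) * (C₁ * Real.log (3*x) ^ (B-1)) := by
          apply mul_le_mul_of_nonneg_left (hS x hx N)
          positivity
  -- large-d branch
  have hlarge : ∑ d ∈ (range N).filter (fun d : ℕ => Squarefree d ∧ ¬ (d:ℝ) ≤ x), F d
      ≤ 2 * (C₂ * Real.log (3*x) ^ (B-1) / x) := by
    have hfilter_eq : (range N).filter (fun d : ℕ => Squarefree d ∧ ¬ (d:ℝ) ≤ x)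
        = (range N).filter (fun d : ℕ => Squarefree d ∧ x < (d:ℝ)) := by
      apply Finset.filter_congr
      intro d _
      simp only [not_le]
    rw [hfilter_eq]
    have hptwise : ∀ d ∈ (range N).filter (fun d : ℕ => Squarefree d ∧ x < (d:ℝ)),
        F d ≤ 2 * ((B - 1) ^ d.primeFactors.card / (d:ℝ)^2) := by
      intro d hd
      simp only [mem_filter, mem_range] at hd
      have hinner : ∑ m ∈ (range N).filter (fun m : ℕ => x < ((d * m : ℕ):ℝ)), 1/(m:ℝ)^2
          ≤ 2 := by
        refine le_trans ?_ (sum_inv_sq_all N)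
        apply Finset.sum_le_sum_of_subset_of_nonneg (Finset.filter_subset _ _)
        intro m _ _
        positivity
      calc F d ≤ (B - 1) ^ d.primeFactors.card / (d:ℝ)^2 * 2 := by
            simp only [hF]
            apply mul_le_mul_of_nonneg_left hinner
            positivity
        _ = 2 * ((B - 1) ^ d.primeFactors.card / (d:ℝ)^2) := by ring
    calc ∑ d ∈ (range N).filter (fun d : ℕ => Squarefree d ∧ x < (d:ℝ)), F d
        ≤ ∑ d ∈ (range N).filter (fun d : ℕ => Squarefree d ∧ x < (d:ℝ)),
            2 * ((B - 1) ^ d.primeFactors.card / (d:ℝ)^2) := Finset.sum_le_sum hptwise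
      _ = 2 * ∑ d ∈ (range N).filter (fun d : ℕ => Squarefree d ∧ x < (d:ℝ)),
            (B - 1) ^ d.primeFactors.card / (d:ℝ)^2 := by rw [← Finset.mul_sum]
      _ ≤ 2 * (C₂ * Real.log (3*x) ^ (B-1) / x) := by
          apply mul_le_mul_of_nonneg_left (hW x hx N) (by norm_num)
  have htotal : (2/x) * (C₁ * Real.log (3*x) ^ (B-1)) + 2 * (C₂ * Real.log (3*x) ^ (B-1) / x)
      = (2*C₁ + 2*C₂) * Real.log (3*x) ^ (B-1) / x := by
    field_simp
  calc ∑ n ∈ (range N).filter (fun n : ℕ => Squarefree n ∧ x < (n:ℝ)),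
        B ^ n.primeFactors.card / (n:ℝ)^2
      ≤ ∑ d ∈ (range N).filter (fun d : ℕ => Squarefree d), F d := hconv
    _ = ∑ d ∈ (range N).filter (fun d : ℕ => Squarefree d ∧ (d:ℝ) ≤ x), F d
        + ∑ d ∈ (range N).filter (fun d : ℕ => Squarefree d ∧ ¬ (d:ℝ) ≤ x), F d := hsplit.symm
    _ ≤ (2/x) * (C₁ * Real.log (3*x) ^ (B-1)) + 2 * (C₂ * Real.log (3*x) ^ (B-1) / x) :=
        add_le_add hsmall hlarge
    _ = (2*C₁ + 2*C₂) * Real.log (3*x) ^ (B-1) / x := htotal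

/-- Base case for the tail sums. -/
lemma W_base {B : ℝ} (h0 : 0 ≤ B) (h1 : B ≤ 1) {x : ℝ} (hx : 1 ≤ x) (N : ℕ) :
    ∑ n ∈ (range N).filter (fun n : ℕ => Squarefree n ∧ x < (n:ℝ)),
        B ^ n.primeFactors.card / (n:ℝ)^2 ≤ 2 * Real.log (3*x) ^ B / x := by
  have hx0 : (0:ℝ) < x := by linarith
  have hL1 : (1:ℝ) ≤ Real.log (3*x) := one_le_logL hx
  have hrp1 : (1:ℝ) ≤ Real.log (3*x) ^ B := Real.one_le_rpow hL1 h0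
  calc ∑ n ∈ (range N).filter (fun n : ℕ => Squarefree n ∧ x < (n:ℝ)),
        B ^ n.primeFactors.card / (n:ℝ)^2
      ≤ ∑ n ∈ (range N).filter (fun n : ℕ => Squarefree n ∧ x < (n:ℝ)), 1/(n:ℝ)^2 := by
        apply Finset.sum_le_sum
        intro n hn
        simp only [mem_filter, mem_range] at hn
        have hn1 : 1 ≤ n := Nat.pos_of_ne_zero hn.2.1.ne_zero
        have hn1' : (1:ℝ) ≤ (n:ℝ) := by exact_mod_cast hn1
        have hpow : B ^ n.primeFactors.card ≤ 1 := pow_le_one₀ h0 h1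
        exact div_le_div_of_nonneg_right hpow (by positivity)
    _ ≤ ∑ n ∈ (range N).filter (fun n : ℕ => x < (n:ℝ)), 1/(n:ℝ)^2 := by
        apply Finset.sum_le_sum_of_subset_of_nonneg
        · intro n hn
          simp only [mem_filter] at hn ⊢
          exact ⟨hn.1, hn.2.2⟩
        · intro n _ _
          positivity
    _ ≤ 2 / x := sum_inv_sq_gt hx N
    _ ≤ 2 * Real.log (3*x) ^ B / x := by
        rw [div_le_div_iff₀ hx0 hx0]
        nlinarith

/-- Full bound for tail sums. -/
lemma W (k : ℕ) : ∀ B : ℝ, 0 ≤ B → B ≤ (k:ℝ) + 1 → ∃ C : ℝ, 0 < C ∧ ∀ x : ℝ, 1 ≤ x → ∀ N : ℕ,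
    ∑ n ∈ (range N).filter (fun n : ℕ => Squarefree n ∧ x < (n:ℝ)),
        B ^ n.primeFactors.card / (n:ℝ)^2 ≤ C * Real.log (3*x) ^ B / x := by
  induction k with
  | zero =>
    intro B h0 h1
    exact ⟨2, by norm_num, fun x hx N => W_base h0 (by norm_num at h1; linarith) hx N⟩
  | succ k ih =>
    intro B h0 h1
    rcases le_or_gt B 1 with hB1 | hB1
    · exact ⟨2, by norm_num, fun x hx N => W_base h0 hB1 hx N⟩
    · obtain ⟨C₁, hC₁, hS⟩ := SB k (B-1) (by linarith) (by push_cast at h1 ⊢; linarith)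
      obtain ⟨C₂, hC₂, hW⟩ := ih (B-1) (by linarith) (by push_cast at h1 ⊢; linarith)
      refine ⟨2*C₁ + 2*C₂, by positivity, fun x hx N => ?_⟩
      refine (step_bound (by linarith) hC₁.le hC₂.le hS hW hx N).trans ?_
      have hL1 : (1:ℝ) ≤ Real.log (3*x) := one_le_logL hx
      have hrle : Real.log (3*x) ^ (B-1) ≤ Real.log (3*x) ^ B :=
        Real.rpow_le_rpow_of_exponent_le hL1 (by linarith)
      have hmul : (2*C₁+2*C₂) * Real.log (3*x) ^ (B-1) ≤ (2*C₁+2*C₂) * Real.log (3*x) ^ B :=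
        mul_le_mul_of_nonneg_left hrle (by positivity)
      exact div_le_div_of_nonneg_right hmul (by linarith)

end SqfTail

/-- For fixed `A ≥ 1`, the sum over squarefree `n > x` of `A^ω(n)/n²` is
`O_A((log 3x)^(A-1)/x)`. -/
theorem squarefree_tail_sum_bound (A : ℝ) (hA : 1 ≤ A) :
    ∃ C : ℝ, 0 < C ∧ ∀ x : ℝ, 1 ≤ x →
      (∑' n : ℕ, if Squarefree n ∧ x < (n : ℝ) then
          A ^ n.primeFactors.card / (n : ℝ) ^ 2 else 0)
        ≤ C * (Real.log (3 * x)) ^ (A - 1) / x := by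
  have h0 : 0 ≤ A - 1 := by linarith
  have hk : A - 1 ≤ (⌈A⌉₊ : ℝ) + 1 := by
    have := Nat.le_ceil A
    linarith
  obtain ⟨C₁, hC₁, hS⟩ := SqfTail.SB ⌈A⌉₊ (A-1) h0 hk
  obtain ⟨C₂, hC₂, hW⟩ := SqfTail.W ⌈A⌉₊ (A-1) h0 hk
  refine ⟨2*C₁ + 2*C₂, by positivity, ?_⟩
  intro x hx
  have hx0 : (0:ℝ) < x := by linarith
  have hL1 : (1:ℝ) ≤ Real.log (3*x) := SqfTail.one_le_logL hx
  have hRHS0 : 0 ≤ (2*C₁ + 2*C₂) * Real.log (3*x) ^ (A-1) / x := by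
    have := Real.rpow_nonneg (by linarith : (0:ℝ) ≤ Real.log (3*x)) (A-1)
    positivity
  set f : ℕ → ℝ := fun n => if Squarefree n ∧ x < (n : ℝ) then
      A ^ n.primeFactors.card / (n : ℝ) ^ 2 else 0 with hf
  have hf0 : ∀ n, 0 ≤ f n := by
    intro n
    simp only [hf]
    split
    · have hA0 : (0:ℝ) ≤ A := by linarith
      positivity
    · exact le_refl 0
  by_cases hsum : Summable f
  · apply Summable.tsum_le_of_sum_le hsum
    intro s
    obtain ⟨N, hN⟩ := s.exists_nat_subset_range
    calc ∑ n ∈ s, f n ≤ ∑ n ∈ Finset.range N, f n :=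
          Finset.sum_le_sum_of_subset_of_nonneg hN (fun n _ _ => hf0 n)
      _ = ∑ n ∈ (Finset.range N).filter (fun n : ℕ => Squarefree n ∧ x < (n:ℝ)),
            A ^ n.primeFactors.card / (n : ℝ) ^ 2 := by
          rw [Finset.sum_filter]
      _ ≤ (2*C₁ + 2*C₂) * Real.log (3*x) ^ (A-1) / x :=
          SqfTail.step_bound hA hC₁.le hC₂.le hS hW hx N
  · rw [tsum_eq_zero_of_not_summable hsum]
    exact hRHS0
end

section
/- For any squarefree positive integer m and real y ≥ 1, the sum of 1/n over integers n > y² with rad(n) = m is O(1/y), where rad(n) is the product of distinct primes dividing n. -/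
open Finset

/-- The completely multiplicative function `n ↦ (√n)⁻¹` as a monoid hom. -/
noncomputable def sqrtInvHom : ℕ →* ℝ where
  toFun n := (Real.sqrt n)⁻¹
  map_one' := by simp
  map_mul' a b := by
    push_cast
    rw [Real.sqrt_mul (by positivity), mul_inv]

lemma sqrtInvHom_apply (n : ℕ) : sqrtInvHom n = (Real.sqrt n)⁻¹ := rfl

/-- Uniformly for squarefree positive integers `m` and `y ≥ 1`, the sum of `1/n` over
`n > y²` with `rad(n) = m` is `O(1/y)`. -/
theorem radical_tail_sum_bound :
    ∃ C : ℝ, 0 < C ∧ ∀ m : ℕ, Squarefree m → ∀ y : ℝ, 1 ≤ y →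
      (∑' n : ℕ, if 0 < n ∧ y ^ 2 < (n : ℝ) ∧ (∏ p ∈ n.primeFactors, p) = m then
          1 / (n : ℝ) else 0)
        ≤ C / y := by
  refine ⟨243, by norm_num, fun m hm y hy => ?_⟩
  have hy0 : (0:ℝ) < y := lt_of_lt_of_le one_pos hy
  have hm0 : m ≠ 0 := hm.ne_zero
  have hmpos : 0 < m := Nat.pos_of_ne_zero hm0
  set S := m.primeFactors with hS
  set F : ℕ → ℝ := fun n =>
    if 0 < n ∧ y ^ 2 < (n : ℝ) ∧ (∏ p ∈ n.primeFactors, p) = m then 1 / (n : ℝ) else 0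
    with hF
  have hFnonneg : ∀ n, 0 ≤ F n := by
    intro n; rw [hF]; dsimp only; split <;> positivity
  -- Euler product for (√·)⁻¹ over S-factored numbers
  have hlt : ∀ {p : ℕ}, p.Prime → ‖sqrtInvHom p‖ < 1 := by
    intro p hp
    have h2 : (2:ℝ) ≤ p := by exact_mod_cast hp.two_le
    have h1 : 1 < Real.sqrt p := by
      rw [show (1:ℝ) = Real.sqrt 1 by simp]
      exact Real.sqrt_lt_sqrt (by norm_num) (by linarith)
    rw [sqrtInvHom_apply, Real.norm_eq_abs, abs_of_nonneg (by positivity)]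
    exact inv_lt_one_of_one_lt₀ h1
  obtain ⟨hsumnorm, hhs⟩ :=
    EulerProduct.summable_and_hasSum_factoredNumbers_prod_filter_prime_geometric
      (f := sqrtInvHom) hlt S
  have hfilter : S.filter (fun p => Nat.Prime p) = S :=
    Finset.filter_true_of_mem fun p hp => Nat.prime_of_mem_primeFactors hp
  rw [hfilter] at hhs
  set P : ℝ := ∏ p ∈ S, (1 - sqrtInvHom p)⁻¹ with hP
  set H : ℕ → ℝ := (Nat.factoredNumbers S).indicator (fun k => (Real.sqrt k)⁻¹) with hHdef
  have hHnonneg : ∀ k, 0 ≤ H k :=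
    Set.indicator_nonneg (fun a _ => by positivity)
  have hsumH : Summable H := by
    rw [hHdef, ← summable_subtype_iff_indicator]
    exact hhs.summable
  have htsumH : ∑' k, H k = P := by
    rw [hHdef, ← _root_.tsum_subtype]
    exact hhs.tsum_eq
  -- reindex: F is supported on multiples of m
  have hinj : Function.Injective (fun k : ℕ => m * k) :=
    fun a b h => by simpa [hm0] using h
  have hsupp : Function.support F ⊆ Set.range (fun k : ℕ => m * k) := by
    intro n hn
    rw [Function.mem_support, hF] at hn
    dsimp only at hn
    by_cases hc : 0 < n ∧ y ^ 2 < (n : ℝ) ∧ (∏ p ∈ n.primeFactors, p) = m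
    · obtain ⟨hn0, _, hrad⟩ := hc
      have hdvd : m ∣ n := hrad ▸ Nat.prod_primeFactors_dvd n
      exact ⟨n / m, (Nat.mul_div_cancel' hdvd)⟩
    · simp [hc] at hn
  -- termwise bound
  have hterm : ∀ k, F (m * k) ≤ 1/y * ((Real.sqrt m)⁻¹ * H k) := by
    intro k
    rw [hF]; dsimp only
    split
    case isFalse =>
      exact mul_nonneg (by positivity) (mul_nonneg (by positivity) (hHnonneg k))
    case isTrue hc =>
      obtain ⟨hpos, hgt, hrad⟩ := hc
      have hk0 : k ≠ 0 := by rintro rfl; simp at hpos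
      have hPF : (m * k).primeFactors = S := by
        conv_rhs => rw [hS, ← hrad]
        rw [Nat.primeFactors_prod fun p hp => Nat.prime_of_mem_primeFactors hp]
      have hkmem : k ∈ Nat.factoredNumbers S := by
        refine ⟨hk0, fun p hp => ?_⟩
        rw [Nat.mem_primeFactorsList hk0] at hp
        rw [← hPF, Nat.mem_primeFactors]
        exact ⟨hp.1, hp.2.trans (dvd_mul_left k m), by positivity⟩
      rw [hHdef, Set.indicator_of_mem hkmem]
      have hsqmul : Real.sqrt ((m : ℝ) * k) = Real.sqrt m * Real.sqrt k :=
        Real.sqrt_mul (by positivity) _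
      set t : ℝ := Real.sqrt ((m * k : ℕ) : ℝ) with ht
      have htsq : t ^ 2 = ((m * k : ℕ) : ℝ) := Real.sq_sqrt (by positivity)
      have hyt : y < t := by
        have := Real.sqrt_lt_sqrt (by positivity) hgt
        rwa [Real.sqrt_sq hy0.le] at this
      have ht0 : 0 < t := lt_trans hy0 hyt
      have h1 : ((m * k : ℕ) : ℝ) ≠ 0 := by positivity
      have hinv : t⁻¹ ≤ 1/y := by
        rw [one_div]
        exact inv_anti₀ hy0 hyt.le
      calc 1 / ((m * k : ℕ) : ℝ) = t⁻¹ * t⁻¹ := by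
            rw [one_div, ← htsq, sq, mul_inv]
        _ ≤ 1/y * t⁻¹ := mul_le_mul_of_nonneg_right hinv (by positivity)
        _ = 1/y * ((Real.sqrt m)⁻¹ * (Real.sqrt k)⁻¹) := by
            rw [ht, show ((m * k : ℕ) : ℝ) = (m : ℝ) * k by push_cast; ring,
              hsqmul, mul_inv]
  have hsumG : Summable (fun k => 1/y * ((Real.sqrt m)⁻¹ * H k)) :=
    ((hsumH.mul_left _).mul_left _)
  have hsumF : Summable (fun k => F (m * k)) :=
    Summable.of_nonneg_of_le (fun k => hFnonneg _) hterm hsumG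
  have hre : ∑' n, F n = ∑' k, F (m * k) := (hinj.tsum_eq hsupp).symm
  have hmain : ∑' n, F n ≤ 1/y * ((Real.sqrt m)⁻¹ * P) := by
    rw [hre, ← htsumH, ← tsum_mul_left, ← tsum_mul_left]
    exact Summable.tsum_le_tsum hterm hsumF hsumG
  -- bound the constant: (√m)⁻¹ * P = ∏ (√p - 1)⁻¹ ≤ 243
  have hprod : (Real.sqrt m)⁻¹ * P = ∏ p ∈ S, (Real.sqrt p - 1)⁻¹ := by
    have hm' : (Real.sqrt m)⁻¹ = ∏ p ∈ S, (Real.sqrt p)⁻¹ := by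
      have := map_prod sqrtInvHom (fun p => p) S
      rw [Nat.prod_primeFactors_of_squarefree hm] at this
      simpa [sqrtInvHom_apply] using this
    rw [hm', hP, ← Finset.prod_mul_distrib]
    refine Finset.prod_congr rfl fun p hp => ?_
    have hp2 : (2:ℝ) ≤ p := by exact_mod_cast (Nat.prime_of_mem_primeFactors hp).two_le
    have h1 : 1 < Real.sqrt p := by
      rw [show (1:ℝ) = Real.sqrt 1 by simp]
      exact Real.sqrt_lt_sqrt (by norm_num) (by linarith)
    rw [sqrtInvHom_apply, ← mul_inv]
    congr 1
    field_simp
  have hCbound : ∏ p ∈ S, (Real.sqrt p - 1)⁻¹ ≤ 243 := by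
    have hstep : ∏ p ∈ S, (Real.sqrt p - 1)⁻¹
        ≤ ∏ p ∈ S, (if p ≤ 4 then (3:ℝ) else 1) := by
      refine Finset.prod_le_prod (fun p hp => ?_) (fun p hp => ?_)
      · have hp2 : (2:ℝ) ≤ p := by
          exact_mod_cast (Nat.prime_of_mem_primeFactors hp).two_le
        have h1 : 1 < Real.sqrt p := by
          rw [show (1:ℝ) = Real.sqrt 1 by simp]
          exact Real.sqrt_lt_sqrt (by norm_num) (by linarith)
        exact inv_nonneg.mpr (by linarith)
      · have hppr := Nat.prime_of_mem_primeFactors hp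
        have hsq := Real.sq_sqrt (show (0:ℝ) ≤ p by positivity)
        have hsn := Real.sqrt_nonneg (p : ℝ)
        split
        case isTrue =>
          have hp2 : (2:ℝ) ≤ p := by exact_mod_cast hppr.two_le
          have h43 : (4/3 : ℝ) ≤ Real.sqrt p := by nlinarith
          calc (Real.sqrt p - 1)⁻¹ ≤ (1/3 : ℝ)⁻¹ :=
                inv_anti₀ (by norm_num) (by linarith)
            _ = 3 := by norm_num
        case isFalse h4 =>
          have hp5 : (5:ℝ) ≤ p := by
            have : 5 ≤ p := by omega
            exact_mod_cast this
          have h2 : (2:ℝ) ≤ Real.sqrt p := by nlinarith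
          exact inv_le_one_of_one_le₀ (by linarith)
    refine hstep.trans ?_
    have heq : ∏ p ∈ S, (if p ≤ 4 then (3:ℝ) else 1)
        = ∏ p ∈ S.filter (fun p => p ≤ 4), (3:ℝ) := by
      rw [Finset.prod_filter]
    rw [heq, Finset.prod_const]
    have hcard : (S.filter (fun p => p ≤ 4)).card ≤ 5 := by
      have hsub : S.filter (fun p => p ≤ 4) ⊆ Finset.range 5 := by
        intro p hp
        rw [Finset.mem_filter] at hp
        exact Finset.mem_range.mpr (by omega)
      simpa using Finset.card_le_card hsub
    calc (3:ℝ) ^ (S.filter (fun p => p ≤ 4)).card ≤ 3 ^ 5 :=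
          pow_le_pow_right₀ (by norm_num) hcard
      _ = 243 := by norm_num
  have hPnonneg : 0 ≤ (Real.sqrt m)⁻¹ * P := by
    rw [hprod]
    refine Finset.prod_nonneg fun p hp => ?_
    have hp2 : (2:ℝ) ≤ p := by
      exact_mod_cast (Nat.prime_of_mem_primeFactors hp).two_le
    have h1 : 1 < Real.sqrt p := by
      rw [show (1:ℝ) = Real.sqrt 1 by simp]
      exact Real.sqrt_lt_sqrt (by norm_num) (by linarith)
    exact inv_nonneg.mpr (by linarith)
  calc (∑' n, F n) ≤ 1/y * ((Real.sqrt m)⁻¹ * P) := hmain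
    _ ≤ 1/y * 243 := by
        refine mul_le_mul_of_nonneg_left ?_ (by positivity)
        rw [hprod] at *
        exact hCbound
    _ = 243 / y := by ring
end

section
/- Let k ≥ 1 be an integer, p ≡ 3 (mod 4) a prime with p ≥ k, and let h₁,...,h_k be integers pairwise incongruent mod p. Define δ_h(p) := lim_{α→∞} p^{−α} #{0 ≤ a < p^α : a + h_i ≡ sum of two squares (mod p^α) for all i}. Then δ_h(p) = (1 + 1/p)^{−1}(1 − (k−1)/p). -/
open Finset

attribute [local instance] Classical.propDecidable

lemma card_filter_ext {s : Finset ℕ} {P Q : ℕ → Prop} {dP : DecidablePred P}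
    {dQ : DecidablePred Q} (h : ∀ a, P a ↔ Q a) :
    (@Finset.filter _ P dP s).card = (@Finset.filter _ Q dQ s).card := by
  congr 1
  ext a
  rw [Finset.mem_filter, Finset.mem_filter]
  exact and_congr Iff.rfl (h a)

/-- Count of multiples of `P` below `P*M`. -/
lemma card_range_filter_dvd (P M : ℕ) (hP : 0 < P) :
    ((range (P*M)).filter (fun r => P ∣ r)).card = M := by
  have himg : (range (P*M)).filter (fun r => P ∣ r) = (range M).image (fun t => P * t) := by
    ext r
    simp only [mem_filter, mem_range, mem_image]
    constructor
    · rintro ⟨hlt, t, rfl⟩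
      exact ⟨t, (Nat.mul_lt_mul_left hP).1 hlt, rfl⟩
    · rintro ⟨t, ht, rfl⟩
      exact ⟨(Nat.mul_lt_mul_left hP).2 ht, ⟨t, rfl⟩⟩
  rw [himg, Finset.card_image_of_injective _ (fun a b hab => by
    exact Nat.eq_of_mul_eq_mul_left hP hab), Finset.card_range]

/-- Shifting by an integer constant preserves counts of periodic predicates. -/
lemma card_shift (N : ℕ) (hN : 0 < N) (h : ℤ) (Q : ℤ → Prop)
    (hQ : ∀ m n : ℤ, m ≡ n [ZMOD (N:ℤ)] → (Q m ↔ Q n)) :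
    ((range N).filter (fun a : ℕ => Q ((a:ℤ) + h))).card
      = ((range N).filter (fun r : ℕ => Q (r:ℤ))).card := by
  have hN' : (0:ℤ) < (N:ℤ) := by exact_mod_cast hN
  have hmem : ∀ x : ℤ, (x % (N:ℤ)).toNat < N := by
    intro x
    have h1 := Int.emod_nonneg x (ne_of_gt hN')
    have h2 := Int.emod_lt_of_pos x hN'
    omega
  have hcast : ∀ x : ℤ, (((x % (N:ℤ)).toNat : ℤ)) = x % (N:ℤ) := by
    intro x
    exact Int.toNat_of_nonneg (Int.emod_nonneg x (ne_of_gt hN'))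
  have hmodeq : ∀ x : ℤ, x % (N:ℤ) ≡ x [ZMOD (N:ℤ)] := fun x => Int.emod_emod_of_dvd x dvd_rfl
  refine Finset.card_bij' (fun a _ => (((a:ℤ) + h) % (N:ℤ)).toNat)
    (fun r _ => (((r:ℤ) - h) % (N:ℤ)).toNat) ?_ ?_ ?_ ?_
  · intro a ha
    simp only [mem_filter, mem_range] at ha ⊢
    refine ⟨hmem _, ?_⟩
    rw [hcast]
    exact (hQ _ _ (hmodeq _)).2 ha.2
  · intro r hr
    simp only [mem_filter, mem_range] at hr ⊢
    refine ⟨hmem _, ?_⟩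
    rw [hcast]
    have : ((r:ℤ) - h) % (N:ℤ) + h ≡ (r:ℤ) [ZMOD (N:ℤ)] := by
      calc ((r:ℤ) - h) % (N:ℤ) + h ≡ ((r:ℤ) - h) + h [ZMOD (N:ℤ)] :=
            Int.ModEq.add_right h (hmodeq _)
        _ = (r:ℤ) := by ring
    exact (hQ _ _ this).2 hr.2
  · intro a ha
    simp only [mem_filter, mem_range] at ha
    have step : ((((((a:ℤ) + h) % (N:ℤ)).toNat : ℤ)) - h) % (N:ℤ) = (a:ℤ) := by
      rw [hcast, Int.sub_emod, Int.emod_emod_of_dvd _ dvd_rfl, ← Int.sub_emod]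
      simp only [add_sub_cancel_right]
      exact Int.emod_eq_of_lt (by positivity) (by exact_mod_cast ha.1)
    simp only [step, Int.toNat_natCast]
  · intro r hr
    simp only [mem_filter, mem_range] at hr
    have step : ((((((r:ℤ) - h) % (N:ℤ)).toNat : ℤ)) + h) % (N:ℤ) = (r:ℤ) := by
      rw [hcast, Int.add_emod, Int.emod_emod_of_dvd _ dvd_rfl, ← Int.add_emod]
      simp only [sub_add_cancel]
      exact Int.emod_eq_of_lt (by positivity) (by exact_mod_cast hr.1)
    simp only [step, Int.toNat_natCast]


open Filter Finset

/-- `n` is a sum of two squares mod `p^α`. -/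
def Sos (p : ℕ) (α : ℕ) (n : ℤ) : Prop :=
  ∃ b c : ℤ, n ≡ b ^ 2 + c ^ 2 [ZMOD (p : ℤ) ^ α]

lemma intCast_pow_eq {p α : ℕ} {m n : ℤ} :
    m ≡ n [ZMOD (p:ℤ)^α] ↔ ((m : ZMod (p^α)) = (n : ZMod (p^α))) := by
  rw [ZMod.intCast_eq_intCast_iff]
  push_cast
  exact Iff.rfl

lemma sos_congr {p α : ℕ} {m n : ℤ} (hmn : m ≡ n [ZMOD (p:ℤ)^α]) :
    Sos p α m ↔ Sos p α n := by
  constructor <;> rintro ⟨b, c, hbc⟩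
  · exact ⟨b, c, hmn.symm.trans hbc⟩
  · exact ⟨b, c, hmn.trans hbc⟩

lemma sos_of_dvd {p α : ℕ} {n : ℤ} (hd : (p:ℤ)^α ∣ n) : Sos p α n :=
  ⟨0, 0, by simpa using (Int.modEq_zero_iff_dvd.2 hd)⟩

section P
variable {p : ℕ} (hp : p.Prime) (hp3 : p % 4 = 3)
include hp hp3

lemma p_ne_two : p ≠ 2 := by omega

/-- mod p, everything is a sum of two squares. -/
lemma sos_one (n : ℤ) : ∃ b c : ℤ, (p:ℤ) ∣ n - (b^2 + c^2) := by
  haveI : Fact p.Prime := ⟨hp⟩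
  obtain ⟨x, y, hxy⟩ := ZMod.sq_add_sq p (n : ZMod p)
  refine ⟨(x.val : ℤ), (y.val : ℤ), ?_⟩
  have : ((n - ((x.val:ℤ)^2 + (y.val:ℤ)^2) : ℤ) : ZMod p) = 0 := by
    push_cast
    simp [ZMod.natCast_val, ZMod.intCast_cast, ← hxy, ZMod.intCast_zmod_cast]
  exact (ZMod.intCast_zmod_eq_zero_iff_dvd _ p).1 this

/-- If `p ∤ n` then `n` is a sum of two squares mod `p^α`, for every `α`. -/
lemma sos_of_not_dvd {n : ℤ} (hn : ¬ (p:ℤ) ∣ n) (α : ℕ) : Sos p α n := by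
  haveI : Fact p.Prime := ⟨hp⟩
  suffices H : ∀ α : ℕ, 1 ≤ α → ∃ b c : ℤ, ¬ (p:ℤ) ∣ b ∧ (p:ℤ)^α ∣ n - (b^2 + c^2) by
    rcases Nat.eq_zero_or_pos α with rfl | hα
    · exact ⟨1, 0, by simp [Int.ModEq]⟩
    · obtain ⟨b, c, _, hdvd⟩ := H α hα
      exact ⟨b, c, Int.modEq_iff_dvd.2 (by rw [← neg_sub]; exact dvd_neg.2 hdvd)⟩
  intro α hα
  induction α, hα using Nat.le_induction with
  | base =>
      obtain ⟨b, c, hbc⟩ := sos_one hp hp3 n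
      have hnb : ¬ ((p:ℤ) ∣ b) ∨ ¬ ((p:ℤ) ∣ c) := by
        by_contra hcon
        push_neg at hcon
        obtain ⟨hb, hc⟩ := hcon
        refine hn ?_
        have h1 : (p:ℤ) ∣ b^2 + c^2 := dvd_add (dvd_pow hb two_ne_zero) (dvd_pow hc two_ne_zero)
        have h2 := dvd_add hbc h1
        simpa using h2
      rcases hnb with hb | hc
      · exact ⟨b, c, hb, by simpa using hbc⟩
      · exact ⟨c, b, hc, by rw [add_comm (c^2)]; simpa using hbc⟩
  | succ α hα ih =>
      obtain ⟨b, c, hb, hdvd⟩ := ih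
      obtain ⟨m, hm⟩ := hdvd
      have h2b : ¬ ((p:ℤ) ∣ 2 * b) := by
        intro hdd
        rcases (Int.Prime.dvd_mul' hp hdd) with h2 | hbb
        · have := Int.le_of_dvd (by norm_num) h2
          omega
        · exact hb hbb
      have hne : ((2 * b : ℤ) : ZMod p) ≠ 0 := by
        rw [Ne, ZMod.intCast_zmod_eq_zero_iff_dvd]; exact h2b
      set u : ZMod p := (m : ZMod p) * ((2 * b : ℤ) : ZMod p)⁻¹ with hu
      set t : ℤ := (u.val : ℤ) with ht
      have htu : (t : ZMod p) = u := by simp [ht, ZMod.natCast_val, ZMod.intCast_cast]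
      have hkey : (p:ℤ) ∣ m - 2 * b * t := by
        rw [← ZMod.intCast_zmod_eq_zero_iff_dvd]
        push_cast
        rw [htu, hu]
        have h2b' : ((2:ZMod p) * (b:ZMod p)) = ((2 * b : ℤ) : ZMod p) := by push_cast; ring
        rw [h2b', mul_comm ((2 * b : ℤ) : ZMod p), mul_assoc,
          inv_mul_cancel₀ hne, mul_one, sub_self]
      refine ⟨b + t * (p:ℤ)^α, c, ?_, ?_⟩
      · intro hdd
        apply hb
        have h1 : (p:ℤ) ∣ t * (p:ℤ)^α := Dvd.dvd.mul_left (dvd_pow_self _ (by omega)) t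
        have h2 := dvd_sub hdd h1
        simpa using h2
      · have hn' : n = b^2 + c^2 + (p:ℤ)^α * m := by linarith [hm]
        have expand : n - ((b + t * (p:ℤ)^α)^2 + c^2)
            = (p:ℤ)^α * (m - 2*b*t) - t^2 * ((p:ℤ)^α)^2 := by
          rw [hn']; ring
        rw [expand]
        apply dvd_sub
        · rw [pow_succ]
          exact mul_dvd_mul_left _ hkey
        · have hpw : (p:ℤ)^(α+1) ∣ ((p:ℤ)^α)^2 := by
            rw [← pow_mul]
            exact pow_dvd_pow _ (by omega)
          exact Dvd.dvd.mul_left hpw _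
/-- For `p ≡ 3 (mod 4)`: `p ∣ b² + c²` forces `p ∣ b` and `p ∣ c`. -/
lemma dvd_of_dvd_sq_add_sq {b c : ℤ} (hd : (p:ℤ) ∣ b^2 + c^2) :
    (p:ℤ) ∣ b ∧ (p:ℤ) ∣ c := by
  haveI : Fact p.Prime := ⟨hp⟩
  have key : ∀ x y : ℤ, (p:ℤ) ∣ x^2 + y^2 → (p:ℤ) ∣ y := by
    intro x y hxy
    by_contra hy
    have hyne : ((y : ℤ) : ZMod p) ≠ 0 := by
      rw [Ne, ZMod.intCast_zmod_eq_zero_iff_dvd]; exact hy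
    have h0 : ((x:ℤ) : ZMod p)^2 + ((y:ℤ) : ZMod p)^2 = 0 := by
      have := (ZMod.intCast_zmod_eq_zero_iff_dvd _ p).2 hxy
      push_cast at this
      exact this
    have hsq : IsSquare (-1 : ZMod p) := by
      refine ⟨((x:ℤ):ZMod p) * ((y:ℤ):ZMod p)⁻¹, ?_⟩
      have h1 : ((x:ℤ):ZMod p)^2 = -((y:ℤ):ZMod p)^2 := by linear_combination h0
      field_simp
      linear_combination -h1
    rw [ZMod.exists_sq_eq_neg_one_iff] at hsq
    exact hsq hp3
  have hc := key b c hd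
  have hb := key c b (by rwa [add_comm])
  exact ⟨hb, hc⟩

/-- Descent: for `p ∣ n`, being a SOS mod `p^(α+2)` is equivalent to
`p² ∣ n` with `n/p²` a SOS mod `p^α`. -/
lemma sos_descent {n : ℤ} (hn : (p:ℤ) ∣ n) (α : ℕ) :
    Sos p (α+2) n ↔ ∃ m : ℤ, n = (p:ℤ)^2 * m ∧ Sos p α m := by
  constructor
  · rintro ⟨b, c, hbc⟩
    have hd : (p:ℤ)^(α+2) ∣ (b^2 + c^2) - n := Int.ModEq.dvd hbc
    have hpbc : (p:ℤ) ∣ b^2 + c^2 := by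
      have h1 : (p:ℤ) ∣ (b^2 + c^2) - n :=
        dvd_trans (dvd_pow_self _ (by omega)) hd
      have := dvd_add h1 hn
      simpa using this
    obtain ⟨hb, hc⟩ := dvd_of_dvd_sq_add_sq hp hp3 hpbc
    obtain ⟨b', rfl⟩ := hb
    obtain ⟨c', rfl⟩ := hc
    have hp2 : (p:ℤ)^2 ∣ n := by
      have h2 : (p:ℤ)^2 ∣ ((p:ℤ)*b')^2 + ((p:ℤ)*c')^2 := ⟨b'^2 + c'^2, by ring⟩
      have h3 : (p:ℤ)^2 ∣ ((p:ℤ)*b')^2 + ((p:ℤ)*c')^2 - n :=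
        dvd_trans (pow_dvd_pow _ (by omega)) hd
      have := dvd_sub h2 h3
      simpa using this
    obtain ⟨m, rfl⟩ := hp2
    refine ⟨m, rfl, b', c', ?_⟩
    have h4 : (p:ℤ)^(α+2) ∣ (p:ℤ)^2 * ((b'^2 + c'^2) - m) := by
      have : (p:ℤ)^2 * ((b'^2 + c'^2) - m) = (((p:ℤ)*b')^2 + ((p:ℤ)*c')^2) - (p:ℤ)^2*m := by
        ring
      rw [this]
      exact hd
    have h5 : (p:ℤ)^α ∣ (b'^2 + c'^2) - m := by
      have hp0 : ((p:ℤ)^2 : ℤ) ≠ 0 := by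
        have := hp.pos; positivity
      rw [pow_add, mul_comm ((p:ℤ)^α)] at h4
      exact (mul_dvd_mul_iff_left hp0).1 h4
    exact (Int.modEq_iff_dvd.2 h5)
  · rintro ⟨m, rfl, b, c, hbc⟩
    refine ⟨(p:ℤ)*b, (p:ℤ)*c, ?_⟩
    have hd : (p:ℤ)^α ∣ (b^2+c^2) - m := Int.ModEq.dvd hbc
    refine Int.modEq_iff_dvd.2 ?_
    have : ((p:ℤ)*b)^2 + ((p:ℤ)*c)^2 - (p:ℤ)^2*m = (p:ℤ)^2 * ((b^2+c^2) - m) := by ring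
    rw [this, pow_add, mul_comm ((p:ℤ)^α)]
    exact mul_dvd_mul_left _ hd

end P

/-- `Vc p α` counts residues `r` mod `p^α` divisible by `p` that are sums of two squares. -/
noncomputable def Vc (p α : ℕ) : ℕ :=
  ((Finset.range (p^α)).filter (fun r : ℕ => (p:ℤ) ∣ (r:ℤ) ∧ Sos p α (r:ℤ))).card

section P2
variable {p : ℕ} (hp : p.Prime) (hp3 : p % 4 = 3)
include hp hp3

lemma sos_one' (n : ℤ) : Sos p 1 n := by
  obtain ⟨b, c, hbc⟩ := sos_one hp hp3 n
  exact ⟨b, c, Int.modEq_iff_dvd.2 (by rw [← neg_sub]; exact dvd_neg.2 (by simpa using hbc))⟩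

lemma sos_zero (n : ℤ) : Sos p 0 n := ⟨0, 0, by simp [Int.ModEq, Int.emod_one]⟩

lemma Vc_one : Vc p 1 = 1 := by
  have hset : ((Finset.range (p^1)).filter (fun r : ℕ => (p:ℤ) ∣ (r:ℤ) ∧ Sos p 1 (r:ℤ))) = {0} := by
    ext r
    simp only [Finset.mem_filter, Finset.mem_range, Finset.mem_singleton, pow_one]
    constructor
    · rintro ⟨hr, hd, -⟩
      rw [Int.natCast_dvd_natCast] at hd
      rcases hd with ⟨t, rfl⟩
      rcases Nat.eq_zero_or_pos t with rfl | ht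
      · simp
      · exfalso; nlinarith [hp.pos]
    · rintro rfl
      exact ⟨hp.pos, by simp, sos_one' hp hp3 0⟩
  rw [Vc, hset, Finset.card_singleton]

lemma Vc_two : Vc p 2 = 1 := by
  have hset : ((Finset.range (p^2)).filter (fun r : ℕ => (p:ℤ) ∣ (r:ℤ) ∧ Sos p 2 (r:ℤ))) = {0} := by
    ext r
    simp only [Finset.mem_filter, Finset.mem_range, Finset.mem_singleton]
    constructor
    · rintro ⟨hr, hd, hsos⟩
      obtain ⟨m, hm, -⟩ := (sos_descent hp hp3 hd 0).1 hsos
      have hp2 : (0:ℤ) < (p:ℤ)^2 := by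
        have : (0:ℤ) < (p:ℤ) := by exact_mod_cast hp.pos
        positivity
      have hm0 : 0 ≤ m := by nlinarith [(by exact_mod_cast Nat.zero_le r : (0:ℤ) ≤ (r:ℤ))]
      have hrlt : (r:ℤ) < (p:ℤ)^2 := by exact_mod_cast hr
      rcases eq_or_lt_of_le hm0 with rfl | hmpos
      · simpa using hm
      · exfalso; nlinarith
    · rintro rfl
      exact ⟨pow_pos hp.pos 2, by simp,
        (sos_descent hp hp3 (by simp) 0).2 ⟨0, by simp, sos_zero hp hp3 0⟩⟩
  rw [Vc, hset, Finset.card_singleton]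

lemma Vc_rec {α : ℕ} (hα : 1 ≤ α) : Vc p (α+2) = (p^α - p^(α-1)) + Vc p α := by
  classical
  have hpz : (0:ℤ) < (p:ℤ) := by exact_mod_cast hp.pos
  -- Step 1: the counted set is the image of the SOS set under multiplication by p².
  have himg : ((Finset.range (p^(α+2))).filter
        (fun r : ℕ => (p:ℤ) ∣ (r:ℤ) ∧ Sos p (α+2) (r:ℤ)))
      = ((Finset.range (p^α)).filter (fun s : ℕ => Sos p α (s:ℤ))).image (fun s => p^2 * s) := by
    ext r
    simp only [Finset.mem_filter, Finset.mem_range, Finset.mem_image]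
    constructor
    · rintro ⟨hr, hd, hsos⟩
      obtain ⟨m, hm, hs⟩ := (sos_descent hp hp3 hd α).1 hsos
      have hp2 : (0:ℤ) < (p:ℤ)^2 := by positivity
      have hm0 : 0 ≤ m := by nlinarith [(by exact_mod_cast Nat.zero_le r : (0:ℤ) ≤ (r:ℤ))]
      have hmlt : m < (p:ℤ)^α := by
        have hr' : (p:ℤ)^2 * m < (p:ℤ)^2 * (p:ℤ)^α := by
          rw [← hm]
          calc (r:ℤ) < ((p^(α+2) : ℕ) : ℤ) := by exact_mod_cast hr
            _ = (p:ℤ)^2 * (p:ℤ)^α := by push_cast; ring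
        exact lt_of_mul_lt_mul_left hr' (le_of_lt hp2)
      refine ⟨m.toNat, ⟨?_, ?_⟩, ?_⟩
      · have : (m.toNat : ℤ) < ((p^α : ℕ) : ℤ) := by
          rw [Int.toNat_of_nonneg hm0]; push_cast; exact hmlt
        exact_mod_cast this
      · rw [show ((m.toNat : ℕ) : ℤ) = m from Int.toNat_of_nonneg hm0]
        exact hs
      · have : ((p^2 * m.toNat : ℕ) : ℤ) = (r:ℤ) := by
          push_cast [Int.toNat_of_nonneg hm0]
          omega
        exact_mod_cast this
    · rintro ⟨s, ⟨hs, hsos⟩, rfl⟩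
      have hd : (p:ℤ) ∣ ((p^2 * s : ℕ) : ℤ) := by
        push_cast
        exact Dvd.dvd.mul_right (dvd_pow_self _ two_ne_zero) _
      refine ⟨?_, hd, ?_⟩
      · calc p^2 * s < p^2 * p^α := mul_lt_mul_of_pos_left hs (pow_pos hp.pos 2)
          _ = p^(α+2) := by ring
      · refine (sos_descent hp hp3 hd α).2 ⟨(s:ℤ), by push_cast; ring, hsos⟩
  have hinj : Function.Injective (fun s : ℕ => p^2 * s) := fun a b hab => by
    exact Nat.eq_of_mul_eq_mul_left (pow_pos hp.pos 2) hab
  have step1 : Vc p (α+2) = ((Finset.range (p^α)).filter (fun s : ℕ => Sos p α (s:ℤ))).card := by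
    rw [Vc, himg, Finset.card_image_of_injective _ hinj]
  -- Step 2: split the SOS set by divisibility by p.
  have hsplit := Finset.card_filter_add_card_filter_not
    (s := (Finset.range (p^α)).filter (fun s : ℕ => Sos p α (s:ℤ)))
    (p := fun s : ℕ => (p:ℤ) ∣ (s:ℤ))
  have h1 : (((Finset.range (p^α)).filter (fun s : ℕ => Sos p α (s:ℤ))).filter
      (fun s : ℕ => (p:ℤ) ∣ (s:ℤ))).card = Vc p α := by
    rw [Finset.filter_filter, Vc]
    congr 1
    ext s
    simp only [Finset.mem_filter, Finset.mem_range]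
    tauto
  have h2 : (((Finset.range (p^α)).filter (fun s : ℕ => Sos p α (s:ℤ))).filter
      (fun s : ℕ => ¬ (p:ℤ) ∣ (s:ℤ))).card = p^α - p^(α-1) := by
    have heq : (((Finset.range (p^α)).filter (fun s : ℕ => Sos p α (s:ℤ))).filter
        (fun s : ℕ => ¬ (p:ℤ) ∣ (s:ℤ)))
        = (Finset.range (p^α)).filter (fun s : ℕ => ¬ (p:ℤ) ∣ (s:ℤ)) := by
      rw [Finset.filter_filter]
      ext s
      simp only [Finset.mem_filter, Finset.mem_range]
      exact ⟨fun ⟨u1, _, u3⟩ => ⟨u1, u3⟩, fun ⟨u1, u2⟩ => ⟨u1, sos_of_not_dvd hp hp3 u2 α, u2⟩⟩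
    have hdvdcard : ((Finset.range (p^α)).filter (fun s : ℕ => (p:ℤ) ∣ (s:ℤ))).card = p^(α-1) := by
      have hpow : p^α = p * p^(α-1) := by
        rw [← pow_succ']
        congr 1
        omega
      have hfe : (Finset.range (p^α)).filter (fun s : ℕ => (p:ℤ) ∣ (s:ℤ))
          = (Finset.range (p * p^(α-1))).filter (fun s : ℕ => p ∣ s) := by
        rw [← hpow]
        ext s
        simp only [Finset.mem_filter, Finset.mem_range, Int.natCast_dvd_natCast]
      rw [hfe, card_range_filter_dvd _ _ hp.pos]
    have hcompl := Finset.card_filter_add_card_filter_not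
      (s := Finset.range (p^α)) (p := fun s : ℕ => (p:ℤ) ∣ (s:ℤ))
    rw [Finset.card_range, hdvdcard] at hcompl
    rw [heq]
    omega
  have htot : Vc p α + (p^α - p^(α-1)) = ((Finset.range (p^α)).filter (fun s : ℕ => Sos p α (s:ℤ))).card := by
    rw [← hsplit, h1, h2]
  rw [step1, ← htot]
  omega

end P2

section P3
variable {p : ℕ} (hp : p.Prime) (hp3 : p % 4 = 3)
include hp hp3

lemma card_dvd_filter {α : ℕ} (hα : 1 ≤ α) :
    ((Finset.range (p^α)).filter (fun s : ℕ => (p:ℤ) ∣ (s:ℤ))).card = p^(α-1) := by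
  have hpow : p^α = p * p^(α-1) := by
    rw [← pow_succ']
    congr 1
    omega
  have hfe : (Finset.range (p^α)).filter (fun s : ℕ => (p:ℤ) ∣ (s:ℤ))
      = (Finset.range (p * p^(α-1))).filter (fun s : ℕ => p ∣ s) := by
    rw [← hpow]
    ext s
    simp only [Finset.mem_filter, Finset.mem_range, Int.natCast_dvd_natCast]
  rw [hfe, card_range_filter_dvd _ _ hp.pos]

variable {k : ℕ} {h : Fin k → ℤ}
  (hinc : ∀ i j : Fin k, i ≠ j → ¬ ((p : ℤ) ∣ h i - h j))
include hinc

lemma Cc_formula {α : ℕ} (hα : 1 ≤ α) :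
    ((Finset.range (p^α)).filter
        (fun a : ℕ => ∀ i : Fin k, Sos p α ((a:ℤ) + h i))).card
      = (p^α - k * p^(α-1)) + k * Vc p α := by
  classical
  have hNpos : 0 < p^α := pow_pos hp.pos α
  have hcast : (((p^α : ℕ)):ℤ) = (p:ℤ)^α := by push_cast; ring
  have hQd : ∀ m n : ℤ, m ≡ n [ZMOD ((p^α : ℕ):ℤ)] → ((p:ℤ) ∣ m ↔ (p:ℤ) ∣ n) := by
    intro m n hmn
    have hdp : (p:ℤ) ∣ ((p^α : ℕ):ℤ) := by
      rw [hcast]; exact dvd_pow_self _ (by omega)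
    have hnm : (p:ℤ) ∣ n - m := dvd_trans hdp hmn.dvd
    constructor
    · intro hm; have := dvd_add hm hnm; simpa using this
    · intro hn; have := dvd_sub hn hnm; simpa using this
  have hQs : ∀ m n : ℤ, m ≡ n [ZMOD ((p^α : ℕ):ℤ)] → (Sos p α m ↔ Sos p α n) := by
    intro m n hmn
    refine sos_congr ?_
    rwa [hcast] at hmn
  -- card of each shifted dvd set
  have hdi : ∀ hi : ℤ, ((Finset.range (p^α)).filter
      (fun a : ℕ => (p:ℤ) ∣ ((a:ℤ) + hi))).card = p^(α-1) := by
    intro hi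
    have c2 := card_shift (p^α) hNpos hi (fun n => (p:ℤ) ∣ n) hQd
    refine Eq.trans ?_ (Eq.trans c2 ?_)
    · exact card_filter_ext (fun a => Iff.rfl)
    · refine Eq.trans ?_ (card_dvd_filter hp hp3 hα)
      exact card_filter_ext (fun a => Iff.rfl)
  -- card of each shifted dvd ∧ Sos set
  have hBi : ∀ i : Fin k, ((Finset.range (p^α)).filter
      (fun a : ℕ => (p:ℤ) ∣ ((a:ℤ) + h i) ∧ Sos p α ((a:ℤ) + h i))).card = Vc p α := by
    intro i
    have c2 := card_shift (p^α) hNpos (h i) (fun n => (p:ℤ) ∣ n ∧ Sos p α n)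
      (fun m n hmn => and_congr (hQd m n hmn) (hQs m n hmn))
    refine Eq.trans ?_ (Eq.trans c2 ?_)
    · exact card_filter_ext (fun a => Iff.rfl)
    · refine Eq.trans ?_ (rfl : Vc p α = Vc p α)
      rw [Vc]
      exact card_filter_ext (fun a => Iff.rfl)
  set A := (Finset.range (p^α)).filter
      (fun a : ℕ => ∀ i : Fin k, Sos p α ((a:ℤ) + h i)) with hA
  set R := fun a : ℕ => ∃ i : Fin k, (p:ℤ) ∣ ((a:ℤ) + h i) with hR
  have hsplit := Finset.card_filter_add_card_filter_not (s := A) (p := R)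
  -- the non-divisible part
  have hnotR : A.filter (fun a => ¬ R a)
      = (Finset.range (p^α)).filter (fun a : ℕ => ¬ R a) := by
    rw [hA, Finset.filter_filter]
    ext a
    simp only [Finset.mem_filter, Finset.mem_range]
    constructor
    · rintro ⟨h1, _, h3⟩; exact ⟨h1, h3⟩
    · rintro ⟨h1, h2⟩
      refine ⟨h1, fun i => ?_, h2⟩
      refine sos_of_not_dvd hp hp3 (fun hdd => h2 ⟨i, hdd⟩) α
  have hRsplit := Finset.card_filter_add_card_filter_not
    (s := Finset.range (p^α)) (p := R)
  have hRcard : ((Finset.range (p^α)).filter R).card = k * p^(α-1) := by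
    have hbi : (Finset.range (p^α)).filter R
        = Finset.univ.biUnion (fun i : Fin k =>
            (Finset.range (p^α)).filter (fun a : ℕ => (p:ℤ) ∣ ((a:ℤ) + h i))) := by
      ext a
      simp only [Finset.mem_filter, Finset.mem_range, Finset.mem_biUnion, Finset.mem_univ,
        true_and, hR]
      tauto
    rw [hbi, Finset.card_biUnion]
    · simp only [hdi, Finset.sum_const, Finset.card_univ, Fintype.card_fin, smul_eq_mul]
    · intro i _ j _ hij
      rw [Function.onFun, Finset.disjoint_left]
      rintro a ha hb
      simp only [Finset.mem_filter] at ha hb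
      refine hinc i j hij ?_
      have := dvd_sub ha.2 hb.2
      simpa using this
  -- the divisible part
  have hRA : A.filter R = Finset.univ.biUnion (fun i : Fin k =>
      (Finset.range (p^α)).filter
        (fun a : ℕ => (p:ℤ) ∣ ((a:ℤ) + h i) ∧ Sos p α ((a:ℤ) + h i))) := by
    ext a
    simp only [hA, Finset.filter_filter, Finset.mem_filter, Finset.mem_range,
      Finset.mem_biUnion, Finset.mem_univ, true_and, hR]
    constructor
    · rintro ⟨h1, h2, i, h3⟩
      exact ⟨i, h1, h3, h2 i⟩
    · rintro ⟨i, h1, h2, h3⟩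
      refine ⟨h1, fun j => ?_, ⟨i, h2⟩⟩
      by_cases hdd : (p:ℤ) ∣ ((a:ℤ) + h j)
      · have hji : j = i := by
          by_contra hne
          refine hinc j i hne ?_
          have := dvd_sub hdd h2
          simpa using this
        rw [hji]; exact h3
      · exact sos_of_not_dvd hp hp3 hdd α
  have hRAcard : (A.filter R).card = k * Vc p α := by
    rw [hRA, Finset.card_biUnion]
    · simp only [hBi, Finset.sum_const, Finset.card_univ, Fintype.card_fin, smul_eq_mul]
    · intro i _ j _ hij
      rw [Function.onFun, Finset.disjoint_left]
      rintro a ha hb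
      simp only [Finset.mem_filter] at ha hb
      refine hinc i j hij ?_
      have := dvd_sub ha.2.1 hb.2.1
      simpa using this
  have hAcard : A.card ≤ p^α := by
    calc A.card ≤ (Finset.range (p^α)).card := Finset.card_filter_le _ _
      _ = p^α := Finset.card_range _
  rw [Finset.card_range] at hRsplit
  rw [hnotR] at hsplit
  omega

end P3

section P4
variable {p : ℕ} (hp : p.Prime) (hp3 : p % 4 = 3)
include hp hp3

lemma Vc_ratio_bound : ∀ α : ℕ, 1 ≤ α →
    |(Vc p α : ℝ)/(p:ℝ)^α - 1/((p:ℝ)*((p:ℝ)+1))| ≤ (p:ℝ)^2/(p:ℝ)^α := by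
  have hp3' : 3 ≤ p := by
    rcases Nat.lt_or_ge p 3 with hlt | hge
    · interval_cases p <;> omega
    · exact hge
  have hP : (3:ℝ) ≤ (p:ℝ) := by exact_mod_cast hp3'
  have hP0 : (0:ℝ) < (p:ℝ) := by linarith
  have hP1 : (0:ℝ) < (p:ℝ) + 1 := by linarith
  intro α
  induction α using Nat.strong_induction_on with
  | _ α IH =>
    intro hα
    match α, hα with
    | 1, _ =>
        rw [Vc_one hp hp3]
        push_cast
        have heq : (1:ℝ)/(p:ℝ)^1 - 1/((p:ℝ)*((p:ℝ)+1)) = 1/((p:ℝ)+1) := by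
          field_simp
          ring
        rw [heq, abs_of_pos (by positivity)]
        rw [div_le_div_iff₀ hP1 (by positivity)]
        nlinarith
    | 2, _ =>
        rw [Vc_two hp hp3]
        push_cast
        have heq : (1:ℝ)/(p:ℝ)^2 - 1/((p:ℝ)*((p:ℝ)+1)) = 1/((p:ℝ)^2*((p:ℝ)+1)) := by
          field_simp
          ring
        rw [heq, abs_of_pos (by positivity)]
        have h1 : (p:ℝ)^2/(p:ℝ)^2 = 1 := div_self (by positivity)
        rw [h1, div_le_one (by positivity)]
        nlinarith
    | (β+3), _ =>
        have hβ : 1 ≤ β + 1 := by omega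
        have IH' := IH (β+1) (by omega) hβ
        have hrec := Vc_rec hp hp3 hβ
        have hle : p^β ≤ p^(β+1) := Nat.pow_le_pow_right hp.pos (by omega)
        have hrec' : Vc p (β+3) = p^(β+1) - p^β + Vc p (β+1) := by
          simpa using hrec
        have hcastV : (Vc p (β+3) : ℝ) = (p:ℝ)^(β+1) - (p:ℝ)^β + (Vc p (β+1) : ℝ) := by
          rw [hrec', Nat.cast_add, Nat.cast_sub hle]
          push_cast
          ring
        have key : (Vc p (β+3) : ℝ)/(p:ℝ)^(β+3) - 1/((p:ℝ)*((p:ℝ)+1))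
            = ((Vc p (β+1) : ℝ)/(p:ℝ)^(β+1) - 1/((p:ℝ)*((p:ℝ)+1)))/(p:ℝ)^2 := by
          rw [hcastV]
          have hne : (p:ℝ) ≠ 0 := ne_of_gt hP0
          have hne1 : (p:ℝ) + 1 ≠ 0 := ne_of_gt hP1
          field_simp
          ring
        rw [key, abs_div, abs_of_pos (by positivity : (0:ℝ) < (p:ℝ)^2)]
        calc |(Vc p (β+1) : ℝ)/(p:ℝ)^(β+1) - 1/((p:ℝ)*((p:ℝ)+1))| / (p:ℝ)^2
            ≤ ((p:ℝ)^2/(p:ℝ)^(β+1)) / (p:ℝ)^2 :=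
              (div_le_div_iff_of_pos_right (by positivity)).2 IH'
          _ = (p:ℝ)^2/(p:ℝ)^(β+3) := by
              rw [div_div, ← pow_add]

lemma Vc_tendsto : Filter.Tendsto (fun α : ℕ => (Vc p α : ℝ)/(p:ℝ)^α)
    Filter.atTop (nhds (1/((p:ℝ)*((p:ℝ)+1)))) := by
  have hp3' : 3 ≤ p := by
    rcases Nat.lt_or_ge p 3 with hlt | hge
    · interval_cases p <;> omega
    · exact hge
  have hP : (3:ℝ) ≤ (p:ℝ) := by exact_mod_cast hp3'
  have h0 : Filter.Tendsto (fun α : ℕ => (Vc p α : ℝ)/(p:ℝ)^α - 1/((p:ℝ)*((p:ℝ)+1)))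
      Filter.atTop (nhds 0) := by
    apply squeeze_zero_norm' (a := fun α : ℕ => (p:ℝ)^2 * (1/(p:ℝ))^α)
    · filter_upwards [Filter.eventually_ge_atTop 1] with α hα
      have := Vc_ratio_bound hp hp3 α hα
      rw [Real.norm_eq_abs]
      calc |(Vc p α : ℝ)/(p:ℝ)^α - 1/((p:ℝ)*((p:ℝ)+1))| ≤ (p:ℝ)^2/(p:ℝ)^α := this
        _ = (p:ℝ)^2 * (1/(p:ℝ))^α := by
            rw [div_pow, one_pow, mul_one_div]
    · have hlt : (1:ℝ)/(p:ℝ) < 1 := by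
        rw [div_lt_one (by linarith)]
        linarith
      have := (tendsto_pow_atTop_nhds_zero_of_lt_one (by positivity) hlt).const_mul ((p:ℝ)^2)
      simpa using this
  have := h0.add (tendsto_const_nhds (x := 1/((p:ℝ)*((p:ℝ)+1))) (f := Filter.atTop))
  simpa using this

end P4

open Filter

/-- For a prime `p ≡ 3 (mod 4)` with `p ≥ k`, and integers `h₁,…,h_k` pairwise
incongruent mod `p`, the local density `δ_h(p)` exists and equals
`(1 + 1/p)⁻¹ (1 − (k−1)/p)`. -/
theorem local_density_coprime_case (k p : ℕ) (hk : 1 ≤ k) (hp : p.Prime)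
    (hp3 : p % 4 = 3) (hpk : k ≤ p) (h : Fin k → ℤ)
    (hinc : ∀ i j : Fin k, i ≠ j → ¬ ((p : ℤ) ∣ h i - h j)) :
    Tendsto (fun α : ℕ =>
        (Set.ncard {a : ℕ | a < p ^ α ∧ ∀ i : Fin k,
            ∃ b c : ℤ, (a : ℤ) + h i ≡ b ^ 2 + c ^ 2 [ZMOD (p : ℤ) ^ α]} : ℝ)
          / (p : ℝ) ^ α)
      atTop (nhds ((1 + 1 / (p : ℝ))⁻¹ * (1 - ((k : ℝ) - 1) / p))) := by
  classical
  have hP0 : (0:ℝ) < (p:ℝ) := by exact_mod_cast hp.pos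
  have hP1 : (0:ℝ) < (p:ℝ) + 1 := by linarith
  have hne : (p:ℝ) ≠ 0 := ne_of_gt hP0
  have hne1 : (p:ℝ) + 1 ≠ 0 := ne_of_gt hP1
  have hval : (1 + 1/(p:ℝ))⁻¹ * (1 - ((k:ℝ)-1)/p)
      = (1 - (k:ℝ)/p) + (k:ℝ) * (1/((p:ℝ)*((p:ℝ)+1))) := by
    rw [show (1 + 1/(p:ℝ)) = ((p:ℝ)+1)/p by field_simp, inv_div]
    field_simp
    ring
  rw [hval]
  have htend := (Vc_tendsto hp hp3).const_mul ((k:ℝ))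
  have hsum := (tendsto_const_nhds (x := 1 - (k:ℝ)/p) (f := atTop)).add htend
  refine Tendsto.congr' ?_ hsum
  filter_upwards [Filter.eventually_ge_atTop 1] with α hα
  have hset : {a : ℕ | a < p ^ α ∧ ∀ i : Fin k,
      ∃ b c : ℤ, (a : ℤ) + h i ≡ b ^ 2 + c ^ 2 [ZMOD (p : ℤ) ^ α]}
      = ↑((Finset.range (p^α)).filter (fun a : ℕ => ∀ i : Fin k, Sos p α ((a:ℤ) + h i))) := by
    ext a
    rw [Finset.mem_coe, Finset.mem_filter]
    simp [Set.mem_setOf_eq, Finset.mem_coe, Finset.mem_filter, Finset.mem_range, Sos]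
  rw [hset, Set.ncard_coe_finset, Cc_formula hp hp3 hinc hα]
  obtain ⟨β, rfl⟩ : ∃ β, α = β + 1 := ⟨α - 1, by omega⟩
  have hkle : k * p^(β+1-1) ≤ p^(β+1) := by
    simp only [Nat.add_sub_cancel]
    calc k * p^β ≤ p * p^β := Nat.mul_le_mul_right _ hpk
      _ = p^(β+1) := by rw [pow_succ]; ring
  rw [Nat.cast_add, Nat.cast_sub hkle]
  push_cast
  have hpow : ((p:ℝ))^(β+1) ≠ 0 := by positivity
  field_simp
  ring
end

section
/- Let d ≥ 1 be squarefree, k ≥ 1, and y ≥ 1. Then the number of tuples of integers 0 < h₁ < ⋯ < h_k ≤ y such that d divides ∏_{0 ≤ i < j ≤ k}(h_i − h_j) (with h₀ := 0) is at most k^{2ω(d)} · (y^k/d + O_k(y^{k−1})). -/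
private lemma aux_step (y a' M P C : ℝ) (hy : 1 ≤ y) (ha : 1 ≤ a') (hM : 1 ≤ M)
    (hP : 0 < P) (hC : 0 ≤ C) :
    (y / a' + 1) * (P * y / M + C * P) ≤ P * y * y / (a' * M) + (2 * C + 1) * (P * y) := by
  have hy0 : (0:ℝ) < y := lt_of_lt_of_le one_pos hy
  have ha0 : (0:ℝ) < a' := lt_of_lt_of_le one_pos ha
  have hM0 : (0:ℝ) < M := lt_of_lt_of_le one_pos hM
  have e1 : (y / a' + 1) * (P * y / M + C * P) = ((y + a') * (P * y + C * P * M)) / (a' * M) := by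
    field_simp
  have e2 : P * y * y / (a' * M) + (2 * C + 1) * (P * y)
      = (P * y * y + (2 * C + 1) * (P * y * (a' * M))) / (a' * M) := by
    field_simp
  rw [e1, e2, div_le_div_iff₀ (by positivity) (by positivity)]
  have t1 : 0 ≤ C * P * M * y * (a' - 1) :=
    mul_nonneg (mul_nonneg (mul_nonneg (mul_nonneg hC hP.le) hM0.le) hy0.le) (by linarith)
  have t2 : 0 ≤ P * y * a' * (M - 1) :=
    mul_nonneg (mul_nonneg (mul_nonneg hP.le hy0.le) ha0.le) (by linarith)
  have t3 : 0 ≤ C * P * M * a' * (y - 1) :=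
    mul_nonneg (mul_nonneg (mul_nonneg (mul_nonneg hC hP.le) hM0.le) ha0.le) (by linarith)
  have hAM : (0:ℝ) < a' * M := by positivity
  nlinarith [mul_nonneg t1 hAM.le, mul_nonneg t2 hAM.le, mul_nonneg t3 hAM.le]

private lemma aux_prod {ι : Type*} [DecidableEq ι] (s : Finset ι) (m : ι → ℕ)
    (hm : ∀ j ∈ s, 1 ≤ m j) (y : ℝ) (hy : 1 ≤ y) :
    ∏ j ∈ s, (y / (m j : ℝ) + 1) ≤
      y ^ s.card / (∏ j ∈ s, (m j : ℝ)) + (2 ^ s.card - 1) * y ^ (s.card - 1) := by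
  induction s using Finset.induction_on with
  | empty => simp
  | insert _ _ hx ih =>
    rename_i a s'
    simp only [Finset.prod_insert hx, Finset.card_insert_of_notMem hx]
    have hma : (1:ℝ) ≤ (m a : ℝ) := by exact_mod_cast hm a (Finset.mem_insert_self a s')
    have hM : (1:ℝ) ≤ ∏ j ∈ s', (m j:ℝ) := by
      have : 1 ≤ ∏ j ∈ s', m j :=
        Finset.one_le_prod' (fun j hj => hm j (Finset.mem_insert_of_mem hj))
      exact_mod_cast this
    have ih' := ih (fun j hj => hm j (Finset.mem_insert_of_mem hj))
    have hy0 : (0:ℝ) < y := lt_of_lt_of_le one_pos hy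
    rcases Finset.eq_empty_or_nonempty s' with rfl | hne
    · simp only [Finset.prod_empty, Finset.card_empty, pow_one, pow_zero, mul_one]
      norm_num
    · have h1 : 0 < s'.card := Finset.card_pos.mpr hne
      set n := s'.card with hn
      have step1 : (y / (m a : ℝ) + 1) * ∏ j ∈ s', (y / (m j : ℝ) + 1) ≤
          (y / (m a : ℝ) + 1) * (y ^ n / (∏ j ∈ s', (m j:ℝ)) + (2 ^ n - 1) * y ^ (n - 1)) :=
        mul_le_mul_of_nonneg_left ih' (by positivity)
      refine step1.trans ?_
      have h2n : (0:ℝ) ≤ 2 ^ n - 1 := by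
        have : (1:ℝ) ≤ 2 ^ n := one_le_pow₀ one_le_two
        linarith
      have hyn : y ^ n = y ^ (n-1) * y := by rw [← pow_succ]; congr 1; omega
      have hyn1 : y ^ (n+1) = y ^ (n-1) * y * y := by rw [← pow_succ, ← pow_succ]; congr 1; omega
      have hpow : (2:ℝ) ^ (n+1) - 1 = 2 * (2 ^ n - 1) + 1 := by rw [pow_succ]; ring
      have hsub : n + 1 - 1 = n := by omega
      have key := aux_step y (m a : ℝ) (∏ j ∈ s', (m j:ℝ)) (y ^ (n-1)) (2 ^ n - 1)
        hy hma hM (by positivity) h2n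
      rw [hsub, hyn1, hpow, hyn]
      linarith [key]

private lemma aux_eq (m a b : ℕ) (hm : 0 < m) (hdvd : (m : ℤ) ∣ (a : ℤ) - (b : ℤ))
    (hq : a / m = b / m) : a = b := by
  have h1 : b ≡ a [MOD m] := (Nat.modEq_iff_dvd).mpr hdvd
  have h2 : b % m = a % m := h1
  have ha := Nat.div_add_mod a m
  have hb := Nat.div_add_mod b m
  rw [hq] at ha
  omega

private lemma count_Sf (k : ℕ) (hk : 1 ≤ k) (d : ℕ) (hd : Squarefree d) (y : ℝ) (hy : 1 ≤ y)
    (f : ℕ → Fin (k + 1) × Fin (k + 1)) (hf : ∀ p ∈ d.primeFactors, (f p).1 < (f p).2) :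
    (Set.ncard {h : Fin (k + 1) → ℕ | h 0 = 0 ∧ (∀ i, (h i : ℝ) ≤ y) ∧
        ∀ p ∈ d.primeFactors, (p : ℤ) ∣ ((h (f p).2 : ℤ) - (h (f p).1 : ℤ))} : ℝ)
      ≤ y ^ k / d + 2 ^ k * y ^ (k - 1) := by
  classical
  have hy0 : (0:ℝ) < y := lt_of_lt_of_le one_pos hy
  set A := {h : Fin (k + 1) → ℕ | h 0 = 0 ∧ (∀ i, (h i : ℝ) ≤ y) ∧
        ∀ p ∈ d.primeFactors, (p : ℤ) ∣ ((h (f p).2 : ℤ) - (h (f p).1 : ℤ))} with hA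
  set m : Fin (k + 1) → ℕ := fun j => ∏ p ∈ d.primeFactors.filter (fun p => (f p).2 = j), p
    with hmdef
  have hm1 : ∀ j, 1 ≤ m j := by
    intro j
    exact Finset.one_le_prod' fun p hp =>
      (Nat.prime_of_mem_primeFactors (Finset.mem_filter.mp hp).1).one_le
  have hm0 : ∀ j, 0 < m j := fun j => hm1 j
  have hmd : ∏ j, m j = d := by
    rw [hmdef]
    rw [Finset.prod_fiberwise d.primeFactors (fun p => (f p).2) (fun p => p)]
    exact Nat.prod_primeFactors_of_squarefree hd
  have hmzero : m 0 = 1 := by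
    rw [hmdef]
    apply Finset.prod_eq_one
    intro p hp
    obtain ⟨hp1, hp2⟩ := Finset.mem_filter.mp hp
    have := hf p hp1
    rw [hp2] at this
    exact absurd this (by simp [Fin.lt_iff_val_lt_val])
  -- the injection
  set Φ : (Fin (k + 1) → ℕ) → (Fin (k + 1) → ℕ) := fun h j => h j / m j with hΦ
  have hinj : Set.InjOn Φ A := by
    intro h hh h' hh' heq
    obtain ⟨h0, hle, hdvd⟩ := hh
    obtain ⟨h0', hle', hdvd'⟩ := hh'
    funext j
    suffices H : ∀ n : ℕ, ∀ j : Fin (k + 1), (j : ℕ) = n → h j = h' j from H j j rfl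
    intro n
    induction n using Nat.strong_induction_on with
    | _ n ih =>
      intro j hj
      have hdj : (m j : ℤ) ∣ (h j : ℤ) - (h' j : ℤ) := by
        rw [Int.natCast_dvd]
        rw [hmdef]
        apply Finset.prod_primes_dvd
        · intro p hp
          exact Nat.prime_iff.mp (Nat.prime_of_mem_primeFactors (Finset.mem_filter.mp hp).1)
        · intro p hp
          obtain ⟨hp1, hp2⟩ := Finset.mem_filter.mp hp
          rw [← Int.natCast_dvd]
          have e1 := hdvd p hp1
          have e2 := hdvd' p hp1
          rw [hp2] at e1 e2
          have hlt : ((f p).1 : ℕ) < n := by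
            have h2 := hf p hp1
            rw [hp2] at h2
            rw [← hj]
            exact Fin.lt_iff_val_lt_val.mp h2
          have heq1 : h (f p).1 = h' (f p).1 := ih _ hlt _ rfl
          have : (↑p : ℤ) ∣ ((h j : ℤ) - (h (f p).1 : ℤ)) - ((h' j : ℤ) - (h' (f p).1 : ℤ)) :=
            dvd_sub e1 e2
          rw [heq1] at this
          convert this using 1
          ring
      have hqj : h j / m j = h' j / m j := congrFun heq j
      exact aux_eq (m j) (h j) (h' j) (hm0 j) hdj hqj
  -- target finset
  set T : Finset (Fin (k+1) → ℕ) :=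
    Fintype.piFinset (fun j => if j = 0 then {0} else Finset.range (⌊y⌋₊ / m j + 1)) with hT
  have himg : Φ '' A ⊆ ↑T := by
    rintro - ⟨h, hh, rfl⟩
    obtain ⟨h0, hle, -⟩ := hh
    rw [Finset.mem_coe, hT, Fintype.mem_piFinset]
    intro j
    by_cases hj : j = 0
    · subst hj
      simp [hΦ, h0]
    · simp only [if_neg hj, Finset.mem_range, hΦ]
      have h1 : h j ≤ ⌊y⌋₊ := Nat.le_floor (hle j)
      have h2 := Nat.div_le_div_right (c := m j) h1
      omega
  have hcard : (A.ncard : ℝ) ≤ (T.card : ℝ) := by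
    have : A.ncard = (Φ '' A).ncard := (Set.ncard_image_of_injOn hinj).symm
    rw [this]
    have := Set.ncard_le_ncard himg T.finite_toSet
    rw [Set.ncard_coe_finset] at this
    exact_mod_cast this
  have hTcard : T.card = ∏ j ∈ Finset.univ.erase 0, (⌊y⌋₊ / m j + 1) := by
    rw [hT, Fintype.card_piFinset]
    rw [← Finset.mul_prod_erase Finset.univ _ (Finset.mem_univ 0), if_pos rfl,
      Finset.card_singleton, one_mul]
    apply Finset.prod_congr rfl
    intro j hj
    rw [if_neg (Finset.ne_of_mem_erase hj), Finset.card_range]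
  have hKcard : (Finset.univ.erase (0 : Fin (k+1))).card = k := by
    rw [Finset.card_erase_of_mem (Finset.mem_univ 0), Finset.card_univ, Fintype.card_fin]
    omega
  have hprodm : ∏ j ∈ Finset.univ.erase (0 : Fin (k+1)), (m j : ℝ) = (d : ℝ) := by
    have := Finset.mul_prod_erase Finset.univ m (Finset.mem_univ 0)
    rw [hmzero, one_mul, hmd] at this
    rw [← this]
    push_cast
    rfl
  have step2 : ((∏ j ∈ Finset.univ.erase (0 : Fin (k+1)), (⌊y⌋₊ / m j + 1) : ℕ) : ℝ)
      ≤ ∏ j ∈ Finset.univ.erase (0 : Fin (k+1)), (y / (m j : ℝ) + 1) := by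
    push_cast
    apply Finset.prod_le_prod
    · intro j _; positivity
    · intro j _
      have h1 : ((⌊y⌋₊ / m j : ℕ):ℝ) ≤ (⌊y⌋₊:ℝ) / (m j:ℝ) := Nat.cast_div_le
      have h2 : (⌊y⌋₊:ℝ) ≤ y := Nat.floor_le hy0.le
      have h3 : (0:ℝ) < (m j : ℝ) := by exact_mod_cast hm0 j
      have h4 : (⌊y⌋₊:ℝ)/(m j:ℝ) ≤ y / (m j : ℝ) := by gcongr
      linarith
  have step3 := aux_prod (Finset.univ.erase (0 : Fin (k+1))) m
    (fun j _ => hm1 j) y hy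
  rw [hKcard, hprodm] at step3
  have h2k : (0:ℝ) < 2 ^ k := by positivity
  have hyk1 : (0:ℝ) < y ^ (k-1) := by positivity
  calc (A.ncard : ℝ) ≤ (T.card : ℝ) := hcard
    _ = ((∏ j ∈ Finset.univ.erase (0 : Fin (k+1)), (⌊y⌋₊ / m j + 1) : ℕ) : ℝ) := by
        rw [hTcard]
    _ ≤ ∏ j ∈ Finset.univ.erase (0 : Fin (k+1)), (y / (m j : ℝ) + 1) := step2
    _ ≤ y ^ k / d + (2 ^ k - 1) * y ^ (k - 1) := step3
    _ ≤ y ^ k / d + 2 ^ k * y ^ (k - 1) := by nlinarith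

/-- For fixed `k ≥ 1` and squarefree `d`, the number of tuples
`0 < h₁ < ⋯ < h_k ≤ y` with `d ∣ ∏_{0 ≤ i < j ≤ k}(h_j − h_i)` (where `h₀ = 0`)
is at most `k^(2ω(d)) (y^k/d + O_k(y^(k−1)))`. -/
theorem count_tuples_with_divisible_det (k : ℕ) (hk : 1 ≤ k) :
    ∃ c : ℝ, 0 < c ∧ ∀ d : ℕ, Squarefree d → ∀ y : ℝ, 1 ≤ y →
      (Set.ncard {h : Fin (k + 1) → ℕ | h 0 = 0 ∧ StrictMono h ∧
          (∀ i : Fin (k + 1), (h i : ℝ) ≤ y) ∧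
          (d : ℤ) ∣ ∏ q ∈ Finset.univ.filter
              (fun q : Fin (k + 1) × Fin (k + 1) => q.1 < q.2),
              ((h q.2 : ℤ) - (h q.1 : ℤ))} : ℝ)
        ≤ (k : ℝ) ^ (2 * d.primeFactors.card) * (y ^ k / d + c * y ^ (k - 1)) := by
  classical
  refine ⟨2 ^ k, by positivity, ?_⟩
  intro d hd y hy
  have hy0 : (0:ℝ) < y := lt_of_lt_of_le one_pos hy
  set P : Finset (Fin (k + 1) × Fin (k + 1)) :=
    Finset.univ.filter (fun q : Fin (k + 1) × Fin (k + 1) => q.1 < q.2) with hP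
  set A : (ℕ → Fin (k + 1) × Fin (k + 1)) → Set (Fin (k + 1) → ℕ) := fun g =>
    {h | h 0 = 0 ∧ (∀ i, (h i : ℝ) ≤ y) ∧
      ∀ p ∈ d.primeFactors, (p : ℤ) ∣ ((h (g p).2 : ℤ) - (h (g p).1 : ℤ))} with hA
  set ext : (↥d.primeFactors → ↥P) → (ℕ → Fin (k + 1) × Fin (k + 1)) := fun f p =>
    if hp : p ∈ d.primeFactors then ((f ⟨p, hp⟩ : Fin (k + 1) × Fin (k + 1))) else (0, 0)
    with hext
  have hextlt : ∀ f, ∀ p ∈ d.primeFactors, (ext f p).1 < (ext f p).2 := by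
    intro f p hp
    rw [hext]; simp only [dif_pos hp]
    exact (Finset.mem_filter.mp (f ⟨p, hp⟩).2).2
  have hcover : {h : Fin (k + 1) → ℕ | h 0 = 0 ∧ StrictMono h ∧
          (∀ i : Fin (k + 1), (h i : ℝ) ≤ y) ∧
          (d : ℤ) ∣ ∏ q ∈ P, ((h q.2 : ℤ) - (h q.1 : ℤ))}
      ⊆ ⋃ f : (↥d.primeFactors → ↥P), A (ext f) := by
    intro h hh
    obtain ⟨h0, hmono, hle, hdvd⟩ := hh
    have hch : ∀ p : ↥d.primeFactors, ∃ q : ↥P,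
        ((p : ℕ) : ℤ) ∣ ((h (q : Fin (k + 1) × Fin (k + 1)).2 : ℤ)
          - (h (q : Fin (k + 1) × Fin (k + 1)).1 : ℤ)) := by
      intro p
      have hp := Nat.prime_of_mem_primeFactors p.2
      have hpd : ((p : ℕ) : ℤ) ∣ (d : ℤ) :=
        Int.natCast_dvd_natCast.mpr (Nat.dvd_of_mem_primeFactors p.2)
      obtain ⟨q, hq, hqd⟩ := (Nat.prime_iff_prime_int.mp hp).exists_mem_finset_dvd (dvd_trans hpd hdvd)
      exact ⟨⟨q, hq⟩, hqd⟩
    choose F hF using hch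
    refine Set.mem_iUnion.mpr ⟨F, h0, hle, ?_⟩
    intro p hp
    have he : ext F p = ↑(F ⟨p, hp⟩) := by rw [hext]; simp only [dif_pos hp]
    rw [he]
    exact hF ⟨p, hp⟩
  have hAfin : ∀ g, (A g).Finite := by
    intro g
    apply Set.Finite.subset (Set.Finite.pi (fun _ : Fin (k + 1) => Set.finite_Iic ⌊y⌋₊))
    intro h hh
    rw [Set.mem_pi]
    intro i _
    exact Nat.le_floor (hh.2.1 i)
  have hcount : (Set.ncard {h : Fin (k + 1) → ℕ | h 0 = 0 ∧ StrictMono h ∧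
          (∀ i : Fin (k + 1), (h i : ℝ) ≤ y) ∧
          (d : ℤ) ∣ ∏ q ∈ P, ((h q.2 : ℤ) - (h q.1 : ℤ))} : ℝ)
      ≤ ∑ f : (↥d.primeFactors → ↥P), ((A (ext f)).ncard : ℝ) := by
    have hufin : (⋃ f : (↥d.primeFactors → ↥P), A (ext f)).Finite :=
      Set.finite_iUnion (fun f => hAfin _)
    have h1 := Set.ncard_le_ncard hcover hufin
    have e : (⋃ f : (↥d.primeFactors → ↥P), A (ext f))
        = ↑(Finset.univ.biUnion (fun f => (hAfin (ext f)).toFinset)) := by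
      ext x
      simp [Set.Finite.mem_toFinset]
    have h2 : (⋃ f : (↥d.primeFactors → ↥P), A (ext f)).ncard
        ≤ ∑ f : (↥d.primeFactors → ↥P), (A (ext f)).ncard := by
      rw [e, Set.ncard_coe_finset]
      refine le_trans Finset.card_biUnion_le (Finset.sum_le_sum ?_)
      intro f _
      exact le_of_eq (Set.ncard_eq_toFinset_card _ _).symm
    have h3 := le_trans h1 h2
    push_cast
    exact_mod_cast h3
  have hbound : ∀ f : (↥d.primeFactors → ↥P),
      ((A (ext f)).ncard : ℝ) ≤ y ^ k / d + 2 ^ k * y ^ (k - 1) := fun f =>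
    count_Sf k hk d hd y hy (ext f) (hextlt f)
  have hB0 : (0:ℝ) ≤ y ^ k / d + 2 ^ k * y ^ (k - 1) := by positivity
  have hsum : ∑ f : (↥d.primeFactors → ↥P), ((A (ext f)).ncard : ℝ)
      ≤ (Fintype.card (↥d.primeFactors → ↥P) : ℝ) * (y ^ k / d + 2 ^ k * y ^ (k - 1)) := by
    calc ∑ f : (↥d.primeFactors → ↥P), ((A (ext f)).ncard : ℝ)
        ≤ ∑ _f : (↥d.primeFactors → ↥P), (y ^ k / d + 2 ^ k * y ^ (k - 1)) :=
          Finset.sum_le_sum (fun f _ => hbound f)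
      _ = (Fintype.card (↥d.primeFactors → ↥P) : ℝ) * (y ^ k / d + 2 ^ k * y ^ (k - 1)) := by
          rw [Finset.sum_const, Finset.card_univ, nsmul_eq_mul]
  have hPk : P.card ≤ k * k := by
    have hle : P.card ≤ ((Finset.range k) ×ˢ (Finset.range k)).card := by
      apply Finset.card_le_card_of_injOn (fun q => ((q.1 : ℕ), (q.2 : ℕ) - 1))
      · intro q hq
        have hlt : (q.1 : ℕ) < (q.2 : ℕ) := (Finset.mem_filter.mp hq).2
        have h2 : (q.2 : ℕ) ≤ k := by omega
        simp only [Finset.mem_coe, Finset.mem_product, Finset.mem_range]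
        omega
      · intro q hq q' hq' hEq
        have h1 : (q.1 : ℕ) < (q.2 : ℕ) := (Finset.mem_filter.mp hq).2
        have h1' : (q'.1 : ℕ) < (q'.2 : ℕ) := (Finset.mem_filter.mp hq').2
        simp only [Prod.mk.injEq] at hEq
        obtain ⟨e1, e2⟩ := hEq
        have e3 : (q.2 : ℕ) = (q'.2 : ℕ) := by omega
        have : q.1 = q'.1 := Fin.ext e1
        have : q.2 = q'.2 := Fin.ext e3
        exact Prod.ext ‹q.1 = q'.1› ‹q.2 = q'.2›
    simpa [Finset.card_product, Finset.card_range] using hle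
  have hcardF : (Fintype.card (↥d.primeFactors → ↥P) : ℝ)
      ≤ (k : ℝ) ^ (2 * d.primeFactors.card) := by
    rw [Fintype.card_fun, Fintype.card_coe, Fintype.card_coe]
    calc ((P.card ^ d.primeFactors.card : ℕ) : ℝ)
        ≤ (((k * k) ^ d.primeFactors.card : ℕ) : ℝ) := by
          exact_mod_cast Nat.pow_le_pow_left hPk _
      _ = (k : ℝ) ^ (2 * d.primeFactors.card) := by
          push_cast
          rw [two_mul, pow_add, ← mul_pow]
  calc (Set.ncard {h : Fin (k + 1) → ℕ | h 0 = 0 ∧ StrictMono h ∧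
          (∀ i : Fin (k + 1), (h i : ℝ) ≤ y) ∧
          (d : ℤ) ∣ ∏ q ∈ P, ((h q.2 : ℤ) - (h q.1 : ℤ))} : ℝ)
      ≤ ∑ f : (↥d.primeFactors → ↥P), ((A (ext f)).ncard : ℝ) := hcount
    _ ≤ (Fintype.card (↥d.primeFactors → ↥P) : ℝ) * (y ^ k / d + 2 ^ k * y ^ (k - 1)) := hsum
    _ ≤ (k : ℝ) ^ (2 * d.primeFactors.card) * (y ^ k / d + 2 ^ k * y ^ (k - 1)) :=
        mul_le_mul_of_nonneg_right hcardF hB0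
end
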